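/- arXiv:1005.0150 — 3 statements merged into one kernel-verified Lean document; each statement's English description precedes it below -/
import Mathlib

section
/- Let M be an increment martingale and τ a stopping time. If the family {M_0 − M_{(τ∨(−n))∧0} : n ≥ 1} is uniformly integrable, then (M_t − M_{t∧τ})_{t∈ℝ} is a martingale. -/
open MeasureTheory Filter Set

noncomputable section

variable {Ω : Type*}

/-- The increment of the process `M` over the interval `(s, ·]`:  `ˢM_t = M_t - M_{t ∧ s}`. -/
def incr (M : ℝ → Ω → ℝ) (s t : ℝ) (ω : Ω) : ℝ := M t ω - M (min t s) ω

/-- A real function is càdlàg : right-continuous with left limits. -/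
def Cadlag (f : ℝ → ℝ) : Prop :=
  (∀ t, ContinuousWithinAt f (Set.Ici t) t) ∧
    ∀ t : ℝ, ∃ l, Tendsto f (nhdsWithin t (Set.Iio t)) (nhds l)

/-- The jump `ΔM_t(ω) = M_t(ω) - M_{t-}(ω)`. -/
def jump (M : ℝ → Ω → ℝ) (ω : Ω) (t : ℝ) : ℝ :=
  M t ω - Function.leftLim (fun u => M u ω) t

/-- A filtration indexed by `ℝ` is right-continuous. -/
def RightContinuousFiltration {m : MeasurableSpace Ω} (ℱ : Filtration ℝ m) : Prop :=
  ∀ t : ℝ, (ℱ t : MeasurableSpace Ω) = ⨅ (u : ℝ) (_ : t < u), (ℱ u : MeasurableSpace Ω)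

/-- Each `ℱ t` contains all `μ`-null sets. -/
def CompleteFiltration {m : MeasurableSpace Ω} (ℱ : Filtration ℝ m) (μ : Measure Ω) : Prop :=
  ∀ (t : ℝ) (s : Set Ω), μ s = 0 → MeasurableSet[ℱ t] s

/-- A martingale in the sense of the paper: adapted, integrable, with the martingale property. -/
def IsMart {m : MeasurableSpace Ω} (ℱ : Filtration ℝ m) (μ : Measure Ω) (M : ℝ → Ω → ℝ) : Prop :=
  Martingale M ℱ μ ∧ ∀ t, Integrable (M t) μ

/-- A square integrable martingale. -/
def IsSqMart {m : MeasurableSpace Ω} (ℱ : Filtration ℝ m) (μ : Measure Ω)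
    (M : ℝ → Ω → ℝ) : Prop :=
  IsMart ℱ μ M ∧ ∀ t, MemLp (M t) 2 μ

/-- An increment martingale: a càdlàg process all of whose increment processes are
martingales. -/
def IsIncMart {m : MeasurableSpace Ω} (ℱ : Filtration ℝ m) (μ : Measure Ω)
    (M : ℝ → Ω → ℝ) : Prop :=
  (∀ ω, Cadlag fun t => M t ω) ∧ ∀ s : ℝ, IsMart ℱ μ (incr M s)

/-- An increment square integrable martingale. -/
def IsIncSqMart {m : MeasurableSpace Ω} (ℱ : Filtration ℝ m) (μ : Measure Ω)
    (M : ℝ → Ω → ℝ) : Prop :=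
  (∀ ω, Cadlag fun t => M t ω) ∧ ∀ s : ℝ, IsSqMart ℱ μ (incr M s)

/-- The process `M` stopped at the (finite) random time `τ`. -/
def stopped (M : ℝ → Ω → ℝ) (τ : Ω → ℝ) : ℝ → Ω → ℝ := fun t ω => M (min t (τ ω)) ω

/-- A localizing sequence of real-valued stopping times. -/
def Localizing {m : MeasurableSpace Ω} (ℱ : Filtration ℝ m) (μ : Measure Ω)
    (σ : ℕ → Ω → ℝ) : Prop :=
  (∀ n, IsStoppingTime ℱ (fun ω => ((σ n ω : ℝ) : WithTop ℝ))) ∧ (∀ ω, Monotone fun n => σ n ω) ∧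
    ∀ᵐ ω ∂μ, Tendsto (fun n => σ n ω) atTop atTop

/-- A local martingale indexed by `ℝ`. -/
def IsLocalMart {m : MeasurableSpace Ω} (ℱ : Filtration ℝ m) (μ : Measure Ω)
    (M : ℝ → Ω → ℝ) : Prop :=
  ∃ σ : ℕ → Ω → ℝ, Localizing ℱ μ σ ∧ ∀ n, IsMart ℱ μ (stopped M (σ n))

/-- A locally square integrable martingale indexed by `ℝ`. -/
def IsLocSqMart {m : MeasurableSpace Ω} (ℱ : Filtration ℝ m) (μ : Measure Ω)
    (M : ℝ → Ω → ℝ) : Prop :=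
  ∃ σ : ℕ → Ω → ℝ, Localizing ℱ μ σ ∧ ∀ n, IsSqMart ℱ μ (stopped M (σ n))

/-- An increment local martingale: every increment process is adapted and a local
martingale (with a localizing sequence possibly depending on `s`). -/
def IsIncLocalMart {m : MeasurableSpace Ω} (ℱ : Filtration ℝ m) (μ : Measure Ω)
    (M : ℝ → Ω → ℝ) : Prop :=
  (∀ ω, Cadlag fun t => M t ω) ∧
    ∀ s : ℝ, Adapted ℱ (incr M s) ∧ IsLocalMart ℱ μ (incr M s)

/-- An increment locally square integrable martingale. -/
def IsIncLocSqMart {m : MeasurableSpace Ω} (ℱ : Filtration ℝ m) (μ : Measure Ω)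
    (M : ℝ → Ω → ℝ) : Prop :=
  (∀ ω, Cadlag fun t => M t ω) ∧
    ∀ s : ℝ, Adapted ℱ (incr M s) ∧ IsLocSqMart ℱ μ (incr M s)

/-- A stopping time with values in `(-∞, ∞]` (encoded in `EReal`, `⊥` excluded separately). -/
def IsStoppingTimeE {m : MeasurableSpace Ω} (ℱ : Filtration ℝ m) (τ : Ω → EReal) : Prop :=
  ∀ t : ℝ, MeasurableSet[ℱ t] {ω | τ ω ≤ (t : EReal)}

/-- The process `M` stopped at the `EReal`-valued random time `τ`. -/
def stoppedE (M : ℝ → Ω → ℝ) (τ : Ω → EReal) : ℝ → Ω → ℝ :=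
  fun t ω => M ((min (t : EReal) (τ ω)).toReal) ω

/-- The process `M`, extended to `-∞` by `Z` and stopped at the `EReal`-valued time `τ`,
as a process indexed by `EReal` (only the values on `[-∞, ∞)` are relevant). -/
def stopE' (M : ℝ → Ω → ℝ) (Z : Ω → ℝ) (τ : Ω → EReal) (t : EReal) (ω : Ω) : ℝ :=
  if min t (τ ω) = ⊥ then Z ω else M ((min t (τ ω)).toReal) ω

/-- The filtration extended to the index `-∞` by `ℱ_{-∞} = ⨅ t, ℱ t`. -/
def FE {m : MeasurableSpace Ω} (ℱ : Filtration ℝ m) (t : EReal) : MeasurableSpace Ω :=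
  if t = ⊥ then ⨅ u : ℝ, (ℱ u : MeasurableSpace Ω) else ℱ t.toReal

/-- A martingale indexed by `[-∞, ∞)` with respect to the extended filtration. -/
def IsMartE {m : MeasurableSpace Ω} (ℱ : Filtration ℝ m) (μ : Measure Ω)
    (N : EReal → Ω → ℝ) : Prop :=
  (∀ t : EReal, t ≠ ⊤ → StronglyMeasurable[FE ℱ t] (N t)) ∧
  (∀ t : EReal, t ≠ ⊤ → Integrable (N t) μ) ∧
  ∀ s t : EReal, s ≤ t → t ≠ ⊤ → μ[N t | FE ℱ s] =ᵐ[μ] N s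

/-- The predictable σ-algebra on `ℝ × Ω`, generated by the simple predictable sets
`B × C` with `C ∈ ℱ t` and `B ⊆ (t, ∞)` a bounded Borel set. -/
def predictableSigma {m : MeasurableSpace Ω} (ℱ : Filtration ℝ m) :
    MeasurableSpace (ℝ × Ω) :=
  MeasurableSpace.generateFrom
    {A | ∃ (t : ℝ) (B : Set ℝ) (C : Set Ω), B ⊆ Set.Ioi t ∧ MeasurableSet B ∧
      Bornology.IsBounded B ∧ MeasurableSet[ℱ t] C ∧ A = B ×ˢ C}

/-- A predictable process. -/
def PredictableProc {m : MeasurableSpace Ω} (ℱ : Filtration ℝ m) (X : ℝ → Ω → ℝ) : Prop :=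
  @Measurable (ℝ × Ω) ℝ (predictableSigma ℱ) _ fun p => X p.1 p.2

/-- The process `X` is associated with the family of increment processes `I`. -/
def Assoc {m : MeasurableSpace Ω} (μ : Measure Ω) (I : ℝ → ℝ → Ω → ℝ) (X : ℝ → Ω → ℝ) : Prop :=
  ∀ s : ℝ, ∀ᵐ ω ∂μ, ∀ t, X t ω - X (min t s) ω = I s t ω

/-- `V` is a quadratic variation of the increment local martingale `M`:
`V ∈ A₀(ℱ)`, `ΔV = (ΔM)²` and `(ˢM)² - ˢV` is a local martingale for every `s`. -/
def IsQuadVar {m : MeasurableSpace Ω} (ℱ : Filtration ℝ m) (μ : Measure Ω)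
    (M V : ℝ → Ω → ℝ) : Prop :=
  (∀ ω, Monotone fun t => V t ω) ∧ (∀ ω, Cadlag fun t => V t ω) ∧ Adapted ℱ V ∧
  (∀ᵐ ω ∂μ, Tendsto (fun t => V t ω) atBot (nhds 0)) ∧
  (∀ᵐ ω ∂μ, ∀ t, jump V ω t = (jump M ω t) ^ 2) ∧
  ∀ s : ℝ, IsLocalMart ℱ μ fun t ω => (incr M s t ω) ^ 2 - incr V s t ω

/-- `V` is a predictable quadratic variation of `M`: an increasing predictable càdlàg
adapted locally integrable process with `V_{-∞} = 0` a.s. such that `(ˢM)² - ˢV` is a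
local martingale for every `s`. -/
def IsPredQV {m : MeasurableSpace Ω} (ℱ : Filtration ℝ m) (μ : Measure Ω)
    (M V : ℝ → Ω → ℝ) : Prop :=
  (∀ ω, Monotone fun t => V t ω) ∧ (∀ ω, Cadlag fun t => V t ω) ∧ Adapted ℱ V ∧
  PredictableProc ℱ V ∧
  (∀ᵐ ω ∂μ, Tendsto (fun t => V t ω) atBot (nhds 0)) ∧
  (∃ σ : ℕ → Ω → ℝ, Localizing ℱ μ σ ∧ ∀ n t, Integrable (stopped V (σ n) t) μ) ∧
  ∀ s : ℝ, IsLocalMart ℱ μ fun t ω => (incr M s t ω) ^ 2 - incr V s t ω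

/-- `Mc` is a continuous martingale component of the increment local martingale `M`:
it is continuous, its increments are adapted local martingales, and the increments of
`M - Mc` are purely discontinuous local martingales (orthogonal to every continuous
local martingale vanishing at `-∞`). -/
def IsContMartPart {m : MeasurableSpace Ω} (ℱ : Filtration ℝ m) (μ : Measure Ω)
    (M Mc : ℝ → Ω → ℝ) : Prop :=
  (∀ ω, Continuous fun t => Mc t ω) ∧
  (∀ s : ℝ, Adapted ℱ (incr Mc s)) ∧
  (∀ s : ℝ, IsLocalMart ℱ μ (incr Mc s)) ∧
  (∀ s : ℝ, IsLocalMart ℱ μ fun t ω => incr M s t ω - incr Mc s t ω) ∧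
  ∀ s : ℝ, ∀ N : ℝ → Ω → ℝ, (∀ ω, Continuous fun t => N t ω) → IsLocalMart ℱ μ N →
    (∀ᵐ ω ∂μ, Tendsto (fun t => N t ω) atBot (nhds 0)) →
    IsLocalMart ℱ μ fun t ω => (incr M s t ω - incr Mc s t ω) * N t ω

/-- The Lebesgue–Stieltjes measure on `ℝ` induced by the (pathwise increasing,
right-continuous) process `V` at the outcome `ω`. -/
def stj (V : ℝ → Ω → ℝ) (hm : ∀ ω, Monotone fun t => V t ω)
    (hrc : ∀ ω t, ContinuousWithinAt (fun u => V u ω) (Set.Ici t) t) (ω : Ω) : Measure ℝ :=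
  StieltjesFunction.measure ⟨fun t => V t ω, hm ω, hrc ω⟩

end


set_option linter.unusedSectionVars false
set_option linter.unusedVariables false

namespace IncMartAux

noncomputable section

lemma coe_min' (a b : ℝ) : ((min a b : ℝ) : EReal) = min (a : EReal) (b : EReal) :=
  EReal.coe_strictMono.monotone.map_min
lemma coe_max' (a b : ℝ) : ((max a b : ℝ) : EReal) = max (a : EReal) (b : EReal) :=
  EReal.coe_strictMono.monotone.map_max

lemma ereal_cases (x : EReal) : x = ⊥ ∨ (∃ r : ℝ, x = (r : EReal)) ∨ x = ⊤ := by
  induction x using EReal.rec with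
  | bot => exact Or.inl rfl
  | coe r => exact Or.inr (Or.inl ⟨r, rfl⟩)
  | top => exact Or.inr (Or.inr rfl)

/-- dyadic upper approximation -/
def dy (k : ℕ) (s : ℝ) : ℝ := (⌈s * 2 ^ k⌉ : ℤ) / 2 ^ k

lemma le_dy (k : ℕ) (s : ℝ) : s ≤ dy k s := by
  rw [dy, le_div_iff₀ (by positivity)]
  exact Int.le_ceil _

lemma dy_le_iff {k : ℕ} {s v : ℝ} : dy k s ≤ v ↔ s ≤ (⌊v * 2 ^ k⌋ : ℤ) / 2 ^ k := by
  rw [dy, div_le_iff₀ (by positivity), le_div_iff₀ (by positivity)]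
  constructor
  · intro h
    have h2 : (⌈s * 2 ^ k⌉ : ℤ) ≤ ⌊v * 2 ^ k⌋ := Int.le_floor.2 h
    exact (Int.ceil_le.1 h2)
  · intro h
    have h2 : (⌈s * 2 ^ k⌉ : ℤ) ≤ ⌊v * 2 ^ k⌋ := Int.ceil_le.2 h
    exact le_trans (by exact_mod_cast h2) (Int.floor_le _)

lemma floor_div_le (k : ℕ) (v : ℝ) : ((⌊v * 2 ^ k⌋ : ℤ) : ℝ) / 2 ^ k ≤ v := by
  rw [div_le_iff₀ (by positivity)]
  exact Int.floor_le _

lemma dy_le (k : ℕ) (s : ℝ) : dy k s ≤ s + ((2 : ℝ) ^ k)⁻¹ := by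
  rw [dy, div_le_iff₀ (by positivity)]
  have := (Int.ceil_lt_add_one (s * 2 ^ k)).le
  calc ((⌈s * 2 ^ k⌉ : ℤ) : ℝ) ≤ s * 2 ^ k + 1 := this
    _ = (s + ((2:ℝ) ^ k)⁻¹) * 2 ^ k := by field_simp

lemma tendsto_dy (s : ℝ) : Tendsto (fun k => dy k s) atTop (nhds s) := by
  have h1 : Tendsto (fun k : ℕ => s + ((2 : ℝ) ^ k)⁻¹) atTop (nhds s) := by
    have : Tendsto (fun k : ℕ => ((2 : ℝ) ^ k)⁻¹) atTop (nhds 0) := by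
      apply tendsto_inv_atTop_zero.comp
      exact tendsto_pow_atTop_atTop_of_one_lt one_lt_two
    simpa using tendsto_const_nhds.add this
  refine tendsto_of_tendsto_of_tendsto_of_le_of_le tendsto_const_nhds h1 (fun k => le_dy k s)
    (fun k => dy_le k s)

lemma measurable_dy (k : ℕ) : Measurable (dy k) := by
  apply Measurable.div_const
  exact Measurable.comp measurable_from_top ((measurable_id.mul_const _).ceil)


variable {Ω : Type*} {m : MeasurableSpace Ω} {μ : Measure Ω} [IsProbabilityMeasure μ]
  {ℱ : Filtration ℝ m}

/-- a real random time seen in `WithTop ℝ` -/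
abbrev wt (π : Ω → ℝ) : Ω → WithTop ℝ := fun ω => (π ω : WithTop ℝ)

lemma sv_wt (X : ℝ → Ω → ℝ) (π : Ω → ℝ) (ω : Ω) : stoppedValue X (wt π) ω = X (π ω) ω := rfl

lemma ofle {π : Ω → ℝ} (h : ∀ v : ℝ, MeasurableSet[ℱ v] {ω | π ω ≤ v}) :
    IsStoppingTime ℱ (wt π) := by
  intro v
  simp only [wt, WithTop.coe_le_coe]
  exact h v

lemma mle {π : Ω → ℝ} (hπ : IsStoppingTime ℱ (wt π)) (v : ℝ) :
    MeasurableSet[ℱ v] {ω | π ω ≤ v} := by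
  have := hπ v
  simp only [wt, WithTop.coe_le_coe] at this
  exact this

lemma mgt {π : Ω → ℝ} (hπ : IsStoppingTime ℱ (wt π)) (v : ℝ) :
    MeasurableSet[ℱ v] {ω | v < π ω} := by
  have : {ω | v < π ω} = {ω | π ω ≤ v}ᶜ := by ext ω; simp
  rw [this]
  exact (mle hπ v).compl

lemma stmin {π : Ω → ℝ} (hπ : IsStoppingTime ℱ (wt π)) (s : ℝ) :
    IsStoppingTime ℱ (wt fun ω => min (π ω) s) := by
  refine ofle fun v => ?_
  have : {ω | min (π ω) s ≤ v} = {ω | π ω ≤ v} ∪ {ω | s ≤ v} := by ext ω; simp [min_le_iff]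
  rw [this]
  exact (mle hπ v).union (mle (ofle fun v => MeasurableSet.const _ : IsStoppingTime ℱ (wt fun _ => s)) v)

lemma stmax {π : Ω → ℝ} (hπ : IsStoppingTime ℱ (wt π)) (s : ℝ) :
    IsStoppingTime ℱ (wt fun ω => max (π ω) s) := by
  refine ofle fun v => ?_
  have : {ω | max (π ω) s ≤ v} = {ω | π ω ≤ v} ∩ {ω | s ≤ v} := by ext ω; simp [max_le_iff]
  rw [this]
  exact (mle hπ v).inter (mle (ofle fun v => MeasurableSet.const _ : IsStoppingTime ℱ (wt fun _ => s)) v)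

lemma leb {π : Ω → ℝ} {b : ℝ} (h : ∀ ω, π ω ≤ b) : ∀ ω, wt π ω ≤ (b : WithTop ℝ) :=
  fun ω => WithTop.coe_le_coe.2 (h ω)

lemma lewt {π ρ : Ω → ℝ} (h : ∀ ω, π ω ≤ ρ ω) : wt π ≤ wt ρ :=
  fun ω => WithTop.coe_le_coe.2 (h ω)

lemma cnt {π : Ω → ℝ} (h : (Set.range π).Countable) : (Set.range (wt π)).Countable := by
  refine (h.image (fun x : ℝ => (x : WithTop ℝ))).mono ?_
  rintro _ ⟨ω, rfl⟩
  exact ⟨π ω, ⟨ω, rfl⟩, rfl⟩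

/-- A right-continuous adapted real process is progressively measurable. -/
theorem progMeasurable_of_rc (ℱ : Filtration ℝ m) {X : ℝ → Ω → ℝ}
    (hA : StronglyAdapted ℱ X) (hrc : ∀ ω t, ContinuousWithinAt (fun u => X u ω) (Ici t) t) :
    ProgMeasurable ℱ X := by
  intro i
  set U : ℕ → Set.Iic i × Ω → ℝ := fun k p => X (min i (dy k p.1)) p.2 with hU
  have hmeas : ∀ k, StronglyMeasurable[(inferInstance : MeasurableSpace (Set.Iic i)).prod (ℱ i)]
      (U k) := by
    intro k
    set R : Set ℝ := insert i ((Set.range fun z : ℤ => (z : ℝ) / 2 ^ k) ∩ Iic i) with hR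
    have hRc : R.Countable := ((Set.countable_range _).mono inter_subset_left).insert i
    haveI := hRc.to_subtype
    have hmem : ∀ p : Set.Iic i × Ω, min i (dy k p.1) ∈ R := by
      intro p
      rcases le_total (dy k p.1) i with h | h
      · rw [min_eq_right h]
        exact Set.mem_insert_of_mem _ ⟨⟨⌈(p.1 : ℝ) * 2 ^ k⌉, rfl⟩, h⟩
      · rw [min_eq_left h]; exact Set.mem_insert _ _
    have hH : @Measurable (Ω × R) ℝ (Prod.instMeasurableSpace (m₁ := ℱ i)) _
        (fun q => X q.2 q.1) := by
      apply measurable_from_prod_countable_left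
      intro v
      have hvi : (v : ℝ) ≤ i := by
        rcases v.2 with h | h
        · exact h.le
        · exact h.2
      exact ((hA v).mono (ℱ.mono hvi)).measurable
    have hφ : @Measurable (Set.Iic i × Ω) (Ω × R)
        ((inferInstance : MeasurableSpace (Set.Iic i)).prod (ℱ i))
        (Prod.instMeasurableSpace (m₁ := ℱ i))
        (fun p => (p.2, ⟨min i (dy k p.1), hmem p⟩)) := by
      apply Measurable.prodMk
      · exact measurable_snd
      · apply Measurable.subtype_mk
        exact (measurable_const.min ((measurable_dy k).comp
          (measurable_subtype_coe.comp measurable_fst)))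
    exact ((hH.comp hφ) : _).stronglyMeasurable
  apply @stronglyMeasurable_of_tendsto (Set.Iic i × Ω) ℝ ℕ
    ((inferInstance : MeasurableSpace (Set.Iic i)).prod (ℱ i)) _ _ atTop _ _ U
    (fun p => X p.1 p.2) hmeas
  rw [tendsto_pi_nhds]
  intro p
  have h1 : Tendsto (fun k => min i (dy k p.1)) atTop (nhds (p.1 : ℝ)) := by
    have := (tendsto_const_nhds (x := i) (f := atTop (α := ℕ))).min (tendsto_dy (p.1 : ℝ))
    rwa [min_eq_right p.1.2] at this
  have h2 : Tendsto (fun k => min i (dy k p.1)) atTop (nhdsWithin (p.1 : ℝ) (Ici p.1)) := by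
    rw [tendsto_nhdsWithin_iff]
    exact ⟨h1, Eventually.of_forall fun k => le_min p.1.2 (le_dy k p.1)⟩
  exact ((hrc p.2 p.1).tendsto).comp h2


/-- dyadic upper approximation of a bounded stopping time -/
def appr (π : Ω → ℝ) (b : ℝ) (k : ℕ) (ω : Ω) : ℝ := min b (dy k (π ω))

lemma appr_isStoppingTime {π : Ω → ℝ} (hπ : IsStoppingTime ℱ (wt π)) (b : ℝ) (k : ℕ) :
    IsStoppingTime ℱ (wt (appr π b k)) := by
  refine ofle fun v => ?_
  by_cases hbv : b ≤ v
  · have : {ω | appr π b k ω ≤ v} = univ := by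
      ext ω; simp only [mem_setOf_eq, mem_univ, iff_true]
      exact le_trans (min_le_left _ _) hbv
    rw [this]; exact MeasurableSet.univ
  · have : {ω | appr π b k ω ≤ v} = {ω | π ω ≤ ((⌊v * 2 ^ k⌋ : ℤ) : ℝ) / 2 ^ k} := by
      ext ω
      simp only [appr, mem_setOf_eq, min_le_iff]
      constructor
      · rintro (h | h)
        · exact absurd h hbv
        · exact dy_le_iff.1 h
      · intro h; exact Or.inr (dy_le_iff.2 h)
    rw [this]
    exact ℱ.mono (floor_div_le k v) _ (mle hπ _)

lemma appr_countable_range (π : Ω → ℝ) (b : ℝ) (k : ℕ) :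
    (Set.range (appr π b k)).Countable := by
  apply Set.Countable.mono _ (((Set.countable_range fun z : ℤ => (z : ℝ) / 2 ^ k)).insert b)
  rintro x ⟨ω, rfl⟩
  rcases le_total b (dy k (π ω)) with h | h
  · rw [appr, min_eq_left h]; exact Set.mem_insert _ _
  · rw [appr, min_eq_right h]; exact Set.mem_insert_of_mem _ ⟨_, rfl⟩

lemma le_appr {π : Ω → ℝ} {b : ℝ} (hπb : ∀ ω, π ω ≤ b) (k : ℕ) (ω : Ω) :
    π ω ≤ appr π b k ω := le_min (hπb ω) (le_dy k _)

lemma appr_le (π : Ω → ℝ) (b : ℝ) (k : ℕ) (ω : Ω) : appr π b k ω ≤ b := min_le_left _ _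

lemma tendsto_appr {π : Ω → ℝ} {b : ℝ} (hπb : ∀ ω, π ω ≤ b) (ω : Ω) :
    Tendsto (fun k => appr π b k ω) atTop (nhds (π ω)) := by
  have := (tendsto_const_nhds (x := b) (f := atTop (α := ℕ))).min (tendsto_dy (π ω))
  rwa [min_eq_right (hπb ω)] at this

/-- convergence of stopped values along pointwise-from-above converging stopping times -/
lemma tendsto_stoppedValue_of_rc {X : ℝ → Ω → ℝ}
    (hrc : ∀ ω t, ContinuousWithinAt (fun u => X u ω) (Ici t) t)
    {ρ : ℕ → Ω → ℝ} {π : Ω → ℝ}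
    (hten : ∀ ω, Tendsto (fun k => ρ k ω) atTop (nhds (π ω)))
    (hge : ∀ k ω, π ω ≤ ρ k ω) (ω : Ω) :
    Tendsto (fun k => stoppedValue X (wt (ρ k)) ω) atTop (nhds (stoppedValue X (wt π) ω)) := by
  have h2 : Tendsto (fun k => ρ k ω) atTop (nhdsWithin (π ω) (Ici (π ω))) := by
    rw [tendsto_nhdsWithin_iff]
    exact ⟨hten ω, Eventually.of_forall fun k => hge k ω⟩
  exact ((hrc ω (π ω)).tendsto).comp h2

lemma integrable_stoppedValue_countable {X : ℝ → Ω → ℝ} (hX : Martingale X ℱ μ)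
    {π : Ω → ℝ} {b : ℝ} (hπ : IsStoppingTime ℱ (wt π)) (hπb : ∀ ω, π ω ≤ b)
    (hcnt : (Set.range π).Countable) : Integrable (stoppedValue X (wt π)) μ :=
  (integrable_condExp).congr
    (hX.stoppedValue_ae_eq_condExp_of_le_const_of_countable_range hπ (leb hπb) (cnt hcnt)).symm

/-- Main approximation lemma: integrability and L¹ convergence of stopped values. -/
theorem stoppedValue_L1_tendsto {X : ℝ → Ω → ℝ} (hX : Martingale X ℱ μ)
    (hXint : ∀ t, Integrable (X t) μ)
    (hrc : ∀ ω t, ContinuousWithinAt (fun u => X u ω) (Ici t) t)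
    {b : ℝ} {ρ : ℕ → Ω → ℝ} (hρ : ∀ k, IsStoppingTime ℱ (wt (ρ k)))
    (hcnt : ∀ k, (Set.range (ρ k)).Countable) (hρb : ∀ k ω, ρ k ω ≤ b)
    {π : Ω → ℝ} (hπ : IsStoppingTime ℱ (wt π)) (hπb : ∀ ω, π ω ≤ b)
    (hten : ∀ ω, Tendsto (fun k => ρ k ω) atTop (nhds (π ω)))
    (hge : ∀ k ω, π ω ≤ ρ k ω) :
    Integrable (stoppedValue X (wt π)) μ ∧
      Tendsto (fun k => eLpNorm (stoppedValue X (wt (ρ k)) - stoppedValue X (wt π)) 1 μ) atTop (nhds 0) := by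
  have hPM := progMeasurable_of_rc ℱ hX.stronglyAdapted hrc
  have hOS : ∀ k, stoppedValue X (wt (ρ k)) =ᵐ[μ] μ[X b | (hρ k).measurableSpace] := fun k =>
    hX.stoppedValue_ae_eq_condExp_of_le_const_of_countable_range (hρ k) (leb (hρb k)) (cnt (hcnt k))
  have hUI : UniformIntegrable (fun k => stoppedValue X (wt (ρ k))) 1 μ :=
    ((hXint b).uniformIntegrable_condExp fun k => (hρ k).measurableSpace_le).ae_eq
      fun k => (hOS k).symm
  have hae : ∀ ω, Tendsto (fun k => stoppedValue X (wt (ρ k)) ω) atTop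
      (nhds (stoppedValue X (wt π) ω)) := tendsto_stoppedValue_of_rc hrc hten hge
  have hSM : AEStronglyMeasurable (stoppedValue X (wt π)) μ :=
    ((stronglyMeasurable_stoppedValue_of_le hPM hπ (leb hπb)).mono (ℱ.le b)).aestronglyMeasurable
  obtain ⟨C, hC⟩ := hUI.2.2
  have hmem : MemLp (stoppedValue X (wt π)) 1 μ := by
    refine ⟨hSM, ?_⟩
    have hle : eLpNorm (stoppedValue X (wt π)) 1 μ ≤
        atTop.liminf fun k => eLpNorm (stoppedValue X (wt (ρ k))) 1 μ :=
      Lp.eLpNorm_lim_le_liminf_eLpNorm (fun k => (hUI.1 k)) _ (Eventually.of_forall hae)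
    refine lt_of_le_of_lt (hle.trans ?_) (ENNReal.coe_lt_top (r := C))
    exact Filter.liminf_le_of_frequently_le (Filter.Frequently.of_forall fun k => hC k)
  refine ⟨memLp_one_iff_integrable.1 hmem, ?_⟩
  exact tendsto_Lp_finite_of_tendsto_ae le_rfl ENNReal.one_ne_top (fun k => hUI.1 k)
    hmem hUI.2.1 (Eventually.of_forall hae)


/-- helper: convergence of set integrals from L¹ convergence -/
lemma tendsto_setIntegral_of_eLpNorm {f : Ω → ℝ} {F : ℕ → Ω → ℝ} (hfi : Integrable f μ)
    (hFi : ∀ k, Integrable (F k) μ)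
    (hL1 : Tendsto (fun k => eLpNorm (F k - f) 1 μ) atTop (nhds 0)) (A : Set Ω) :
    Tendsto (fun k => ∫ ω in A, F k ω ∂μ) atTop (nhds (∫ ω in A, f ω ∂μ)) := by
  refine tendsto_setIntegral_of_L1 f hfi.aestronglyMeasurable (Eventually.of_forall hFi) ?_ A
  have : ∀ k, (∫⁻ ω, ‖F k ω - f ω‖ₑ ∂μ) = eLpNorm (F k - f) 1 μ := fun k => by
    rw [eLpNorm_one_eq_lintegral_enorm]; rfl
  simpa only [this] using hL1

/-- Claim C: optional sampling at the stopping-time σ-algebra, general bounded stopping time -/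
theorem stoppedValue_ae_eq_condexp_stopping {X : ℝ → Ω → ℝ} (hX : Martingale X ℱ μ)
    (hXint : ∀ t, Integrable (X t) μ)
    (hrc : ∀ ω t, ContinuousWithinAt (fun u => X u ω) (Ici t) t)
    {π : Ω → ℝ} {b : ℝ} (hπ : IsStoppingTime ℱ (wt π)) (hπb : ∀ ω, π ω ≤ b) :
    stoppedValue X (wt π) =ᵐ[μ] μ[X b | hπ.measurableSpace] := by
  have hPM := progMeasurable_of_rc ℱ hX.stronglyAdapted hrc
  set ρ : ℕ → Ω → ℝ := appr π b with hρdef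
  have hρ : ∀ k, IsStoppingTime ℱ (wt (ρ k)) := fun k => appr_isStoppingTime hπ b k
  have hcnt := fun k => appr_countable_range π b k
  have hρb : ∀ k ω, ρ k ω ≤ b := fun k ω => appr_le π b k ω
  have hge : ∀ k ω, π ω ≤ ρ k ω := fun k ω => le_appr hπb k ω
  have hten : ∀ ω, Tendsto (fun k => ρ k ω) atTop (nhds (π ω)) := tendsto_appr hπb
  obtain ⟨hint, hL1⟩ := stoppedValue_L1_tendsto hX hXint hrc hρ hcnt hρb hπ hπb hten hge
  have hOS : ∀ k, stoppedValue X (wt (ρ k)) =ᵐ[μ] μ[X b | (hρ k).measurableSpace] := fun k =>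
    hX.stoppedValue_ae_eq_condExp_of_le_const_of_countable_range (hρ k) (leb (hρb k)) (cnt (hcnt k))
  refine ae_eq_condExp_of_forall_setIntegral_eq hπ.measurableSpace_le (hXint b)
    (fun A _ _ => hint.integrableOn) (fun A hA _ => ?_) ?_
  · -- set integral equality
    have hAk : ∀ k, MeasurableSet[(hρ k).measurableSpace] A := fun k =>
      (IsStoppingTime.measurableSpace_mono hπ (hρ k) (lewt (hge k))) A hA
    have hseq : ∀ k, ∫ ω in A, stoppedValue X (wt (ρ k)) ω ∂μ = ∫ ω in A, X b ω ∂μ := by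
      intro k
      rw [setIntegral_congr_ae (hπ.measurableSpace_le A hA)
        ((hOS k).mono fun ω h _ => h)]
      exact setIntegral_condExp ((hρ k).measurableSpace_le) (hXint b) (hAk k)
    have h1 : Tendsto (fun k => ∫ ω in A, stoppedValue X (wt (ρ k)) ω ∂μ) atTop
        (nhds (∫ ω in A, stoppedValue X (wt π) ω ∂μ)) :=
      tendsto_setIntegral_of_eLpNorm hint
        (fun k => integrable_stoppedValue_countable hX (hρ k) (hρb k) (hcnt k)) hL1 A
    simp only [hseq] at h1
    exact tendsto_nhds_unique h1 tendsto_const_nhds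
  · exact StronglyMeasurable.aestronglyMeasurable
      (Measurable.stronglyMeasurable (measurable_stoppedValue hPM hπ))

/-- Claim B: optional sampling, conditioning at a fixed time `s` -/
theorem condexp_stoppedValue_min {X : ℝ → Ω → ℝ} (hX : Martingale X ℱ μ)
    (hXint : ∀ t, Integrable (X t) μ)
    (hrc : ∀ ω t, ContinuousWithinAt (fun u => X u ω) (Ici t) t)
    {π : Ω → ℝ} {b : ℝ} (hπ : IsStoppingTime ℱ (wt π)) (hπb : ∀ ω, π ω ≤ b) (s : ℝ) :
    μ[stoppedValue X (wt π) | ℱ s] =ᵐ[μ] stoppedValue X (wt fun ω => min (π ω) s) := by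
  have hPM := progMeasurable_of_rc ℱ hX.stronglyAdapted hrc
  set ρ : ℕ → Ω → ℝ := appr π b with hρdef
  have hρ : ∀ k, IsStoppingTime ℱ (wt (ρ k)) := fun k => appr_isStoppingTime hπ b k
  have hcnt := fun k => appr_countable_range π b k
  have hρb : ∀ k ω, ρ k ω ≤ b := fun k ω => appr_le π b k ω
  have hge : ∀ k ω, π ω ≤ ρ k ω := fun k ω => le_appr hπb k ω
  have hten : ∀ ω, Tendsto (fun k => ρ k ω) atTop (nhds (π ω)) := tendsto_appr hπb
  obtain ⟨hint, hL1⟩ := stoppedValue_L1_tendsto hX hXint hrc hρ hcnt hρb hπ hπb hten hge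
  -- min versions
  set σ : ℕ → Ω → ℝ := fun k ω => min (ρ k ω) s with hσdef
  have hσ : ∀ k, IsStoppingTime ℱ (wt (σ k)) := fun k => stmin (hρ k) s
  have hσcnt : ∀ k, (Set.range (σ k)).Countable := by
    intro k
    apply Set.Countable.mono _ ((hcnt k).image fun x => min x s)
    rintro x ⟨ω, rfl⟩
    exact ⟨ρ k ω, ⟨ω, rfl⟩, rfl⟩
  have hσb : ∀ k ω, σ k ω ≤ b := fun k ω => le_trans (min_le_left _ _) (hρb k ω)
  have hπs : IsStoppingTime ℱ (wt fun ω => min (π ω) s) := stmin hπ s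
  have hπsb : ∀ ω, min (π ω) s ≤ b := fun ω => le_trans (min_le_left _ _) (hπb ω)
  have hσge : ∀ k ω, min (π ω) s ≤ σ k ω := fun k ω => min_le_min (hge k ω) le_rfl
  have hσten : ∀ ω, Tendsto (fun k => σ k ω) atTop (nhds (min (π ω) s)) := fun ω =>
    (hten ω).min tendsto_const_nhds
  obtain ⟨hints, hL1s⟩ := stoppedValue_L1_tendsto hX hXint hrc hσ hσcnt hσb hπs hπsb hσten hσge
  have hintk : ∀ k, Integrable (stoppedValue X (wt (ρ k))) μ := fun k =>
    integrable_stoppedValue_countable hX (hρ k) (hρb k) (hcnt k)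
  have hintsk : ∀ k, Integrable (stoppedValue X (wt (σ k))) μ := fun k =>
    integrable_stoppedValue_countable hX (hσ k) (hσb k) (hσcnt k)
  symm
  refine ae_eq_condExp_of_forall_setIntegral_eq (ℱ.le s) hint
    (fun A _ _ => hints.integrableOn) (fun A hA _ => ?_) ?_
  · -- key: ∀ A ∈ ℱ s, ∫_A X_{π∧s} = ∫_A X_π ; first for the countable approximations
    have hkey : ∀ k, ∫ ω in A, stoppedValue X (wt (σ k)) ω ∂μ
        = ∫ ω in A, stoppedValue X (wt (ρ k)) ω ∂μ := by
      intro k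
      have hOS2 : stoppedValue X (wt (σ k)) =ᵐ[μ]
          μ[stoppedValue X (wt (ρ k)) | (hσ k).measurableSpace] :=
        hX.stoppedValue_ae_eq_condExp_of_le_of_countable_range (hρ k) (hσ k)
          (lewt fun ω => min_le_left _ _) (leb (hρb k)) (cnt (hcnt k)) (cnt (hσcnt k))
      have hAm : MeasurableSet A := ℱ.le s A hA
      -- split A into A ∩ {ρ k ≤ s} and A ∩ {s < ρ k}
      set A₁ := A ∩ {ω | ρ k ω ≤ s} with hA₁def
      set A₂ := A ∩ {ω | s < ρ k ω} with hA₂def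
      have hA₁m : MeasurableSet A₁ := hAm.inter (ℱ.le s _ (mle (hρ k) s))
      have hA₂ℱs : MeasurableSet[ℱ s] A₂ := hA.inter (mgt (hρ k) s)
      have hA₂m : MeasurableSet A₂ := hAm.inter (ℱ.le s _ (mgt (hρ k) s))
      have hdisj : Disjoint A₁ A₂ := by
        refine Set.disjoint_left.2 fun ω h1 h2 => ?_
        exact lt_irrefl s (lt_of_lt_of_le h2.2 h1.2)
      have hunion : A₁ ∪ A₂ = A := by
        ext ω; simp only [hA₁def, hA₂def, Set.mem_union, Set.mem_inter_iff, mem_setOf_eq]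
        constructor
        · rintro (h | h) <;> exact h.1
        · intro h; rcases le_or_gt (ρ k ω) s with h' | h'
          · exact Or.inl ⟨h, h'⟩
          · exact Or.inr ⟨h, h'⟩
      have heq1 : ∫ ω in A₁, stoppedValue X (wt (σ k)) ω ∂μ
          = ∫ ω in A₁, stoppedValue X (wt (ρ k)) ω ∂μ := by
        refine setIntegral_congr_fun hA₁m fun ω hω => ?_
        simp only [sv_wt, hσdef]
        rw [min_eq_left hω.2]
      have hA₂G : MeasurableSet[(hσ k).measurableSpace] A₂ := by
        refine ⟨le_iSup ℱ s _ hA₂ℱs, fun v => ?_⟩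
        simp only [wt, WithTop.coe_le_coe]
        by_cases hsv : s ≤ v
        · have h3 : A₂ ∩ {ω | σ k ω ≤ v} = A₂ := by
            refine Set.inter_eq_left.2 fun ω _ => ?_
            exact le_trans (min_le_right _ _) hsv
          rw [h3]
          exact ℱ.mono hsv _ (hA₂ℱs)
        · have h3 : A₂ ∩ {ω | σ k ω ≤ v} = ∅ := by
            ext ω
            simp only [hσdef, Set.mem_inter_iff, mem_setOf_eq, Set.mem_empty_iff_false,
              iff_false, not_and, hA₂def, min_le_iff]
            rintro ⟨_, h2⟩ (h | h)
            · exact absurd (h.trans (le_of_lt (lt_of_not_ge hsv))) (not_le.2 h2)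
            · exact hsv h
          rw [h3]; exact @MeasurableSet.empty _ (ℱ v)
      have heq2 : ∫ ω in A₂, stoppedValue X (wt (σ k)) ω ∂μ
          = ∫ ω in A₂, stoppedValue X (wt (ρ k)) ω ∂μ := by
        rw [setIntegral_congr_ae ((hσ k).measurableSpace_le A₂ hA₂G)
          (hOS2.mono fun ω h _ => h)]
        exact setIntegral_condExp ((hσ k).measurableSpace_le) (hintk k) hA₂G
      rw [← hunion, setIntegral_union hdisj hA₂m (hintsk k).integrableOn (hintsk k).integrableOn,
        setIntegral_union hdisj hA₂m (hintk k).integrableOn (hintk k).integrableOn, heq1, heq2]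
    have h1 : Tendsto (fun k => ∫ ω in A, stoppedValue X (wt (σ k)) ω ∂μ) atTop
        (nhds (∫ ω in A, stoppedValue X (wt fun ω => min (π ω) s) ω ∂μ)) :=
      tendsto_setIntegral_of_eLpNorm hints hintsk hL1s A
    have h2 : Tendsto (fun k => ∫ ω in A, stoppedValue X (wt (ρ k)) ω ∂μ) atTop
        (nhds (∫ ω in A, stoppedValue X (wt π) ω ∂μ)) :=
      tendsto_setIntegral_of_eLpNorm hint hintk hL1 A
    simp only [hkey] at h1
    exact tendsto_nhds_unique h1 h2
  · exact StronglyMeasurable.aestronglyMeasurable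
      (stronglyMeasurable_stoppedValue_of_le hPM hπs (leb fun ω => min_le_right _ _))


/-- the real-valued time `(t ∧ (τ ∨ c))` -/
def piF (τ : Ω → EReal) (c t : ℝ) (ω : Ω) : ℝ := (min (t : EReal) (max (τ ω) (c : EReal))).toReal

lemma piF_real {τ : Ω → EReal} {ω : Ω} {x : ℝ} (hx : τ ω = (x : EReal)) (c t : ℝ) :
    piF τ c t ω = min t (max x c) := by
  rw [piF, hx, ← coe_max', ← coe_min', EReal.toReal_coe]

lemma piF_top {τ : Ω → EReal} {ω : Ω} (hx : τ ω = ⊤) (c t : ℝ) : piF τ c t ω = t := by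
  rw [piF, hx, max_eq_left le_top, min_eq_left le_top, EReal.toReal_coe]

lemma piF_le (τ : Ω → EReal) (c t : ℝ) (ω : Ω) : piF τ c t ω ≤ t := by
  rcases ereal_cases (τ ω) with hx | ⟨x, hx⟩ | hx
  · rw [piF, hx, max_eq_right bot_le, ← coe_min', EReal.toReal_coe]
    exact min_le_left _ _
  · rw [piF_real hx]; exact min_le_left _ _
  · rw [piF_top hx]

lemma piF_min (τ : Ω → EReal) (c : ℝ) {s t : ℝ} (hst : s ≤ t) (ω : Ω) :
    piF τ c s ω = min (piF τ c t ω) s := by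
  rcases ereal_cases (τ ω) with hx | ⟨x, hx⟩ | hx
  · rw [piF, piF, hx, max_eq_right bot_le, ← coe_min', ← coe_min',
      EReal.toReal_coe, EReal.toReal_coe, min_right_comm, min_eq_right hst]
  · rw [piF_real hx, piF_real hx, min_right_comm, min_eq_right hst]
  · rw [piF_top hx, piF_top hx, min_eq_right hst]

lemma piF_min_c (τ : Ω → EReal) (c t : ℝ) (ω : Ω) (hbot : τ ω ≠ ⊥) :
    min (piF τ c t ω) c = min t c := by
  rcases ereal_cases (τ ω) with hx | ⟨x, hx⟩ | hx
  · exact absurd hx hbot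
  · rw [piF_real hx, min_assoc, min_eq_right (le_max_right x c)]
  · rw [piF_top hx]

lemma piF_isStoppingTime (ℱ : Filtration ℝ m) {τ : Ω → EReal} (hτ : IsStoppingTimeE ℱ τ)
    (c t : ℝ) : IsStoppingTime ℱ (wt (piF τ c t)) := by
  refine ofle fun v => ?_
  have hiff : ∀ ω, piF τ c t ω ≤ v ↔ (t ≤ v ∨ (τ ω ≤ (v : EReal) ∧ c ≤ v)) := by
    intro ω
    rcases ereal_cases (τ ω) with hx | ⟨x, hx⟩ | hx
    · rw [piF, hx, max_eq_right bot_le, ← coe_min', EReal.toReal_coe, min_le_iff]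
      simp [hx, EReal.coe_le_coe_iff]
    · rw [piF_real hx, min_le_iff, max_le_iff, hx]
      simp [EReal.coe_le_coe_iff]
    · rw [piF_top hx, hx]
      simp
  by_cases htv : t ≤ v
  · have : {ω | piF τ c t ω ≤ v} = univ := by
      ext ω; simp only [mem_setOf_eq, mem_univ, iff_true, hiff]; exact Or.inl htv
    rw [this]; exact MeasurableSet.univ
  · by_cases hcv : c ≤ v
    · have : {ω | piF τ c t ω ≤ v} = {ω | τ ω ≤ (v : EReal)} := by
        ext ω
        simp only [mem_setOf_eq, hiff, htv, false_or, hcv, and_true]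
      rw [this]; exact hτ v
    · have : {ω | piF τ c t ω ≤ v} = ∅ := by
        ext ω
        simp only [mem_setOf_eq, hiff, htv, hcv, and_false, or_false, false_or,
          Set.mem_empty_iff_false]
      rw [this]; exact @MeasurableSet.empty _ (ℱ v)

lemma incr_eq (M : ℝ → Ω → ℝ) {τ : Ω → EReal} (hbot : ∀ ω, τ ω ≠ ⊥) (c t : ℝ) (ω : Ω) :
    M t ω - M (piF τ c t ω) ω
      = incr M c t ω - stoppedValue (incr M c) (wt (piF τ c t)) ω := by
  simp only [incr, sv_wt]
  rw [piF_min_c τ c t ω (hbot ω)]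
  ring

/-- eventual equality with the limit process -/
lemma piF_eventually (τ : Ω → EReal) (hbot : ∀ ω, τ ω ≠ ⊥) (t : ℝ) (ω : Ω) :
    ∀ᶠ n : ℕ in atTop, piF τ (-(n + 1 : ℝ)) t ω = (min (t : EReal) (τ ω)).toReal := by
  rcases ereal_cases (τ ω) with hx | ⟨x, hx⟩ | hx
  · exact absurd hx (hbot ω)
  ·
    obtain ⟨n₀, hn₀⟩ := exists_nat_ge (-x)
    filter_upwards [eventually_ge_atTop n₀] with n hn
    rw [piF_real hx, hx, ← coe_min', EReal.toReal_coe]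
    congr 1
    rw [max_eq_left]
    have : (n₀ : ℝ) ≤ (n : ℝ) := by exact_mod_cast hn
    linarith
  · filter_upwards with n
    rw [piF_top hx, hx, min_eq_left le_top, EReal.toReal_coe]

/-- decomposition at nonnegative times -/
lemma split_identity (f : ℝ → ℝ) (r : ℝ) : f (min r 0) + f (max r 0) = f r + f 0 := by
  rcases le_total r 0 with h | h
  · rw [min_eq_left h, max_eq_right h]
  · rw [min_eq_right h, max_eq_left h, add_comm]

lemma decomp_nonneg (M : ℝ → Ω → ℝ) {τ : Ω → EReal} (hbot : ∀ ω, τ ω ≠ ⊥) (c : ℝ) {t : ℝ}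
    (ht : 0 ≤ t) (ω : Ω) :
    M t ω - M (piF τ c t ω) ω
      = (M 0 ω - M (piF τ c 0 ω) ω)
        + (incr M 0 t ω - stoppedValue (incr M 0) (wt fun ω => max (piF τ c t ω) 0) ω) := by
  have h0 : piF τ c 0 ω = min (piF τ c t ω) 0 := piF_min τ c ht ω
  set r := piF τ c t ω
  simp only [incr, sv_wt, h0]
  rw [min_eq_right ht, min_eq_right (le_max_right r 0)]
  have := split_identity (fun u => M u ω) r
  linarith


/-- right-continuity of increment paths -/
lemma incr_rc {M : ℝ → Ω → ℝ} (hcad : ∀ ω, Cadlag fun t => M t ω) (c : ℝ) (ω : Ω) (t : ℝ) :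
    ContinuousWithinAt (fun u => incr M c u ω) (Ici t) t := by
  have h1 : ContinuousWithinAt (fun u => M u ω) (Ici t) t := (hcad ω).1 t
  have h2 : ContinuousWithinAt (fun u => M (min u c) ω) (Ici t) t := by
    have hmin : ContinuousWithinAt (fun u : ℝ => min u c) (Ici t) t :=
      (continuous_id.min continuous_const).continuousWithinAt
    have hmap : MapsTo (fun u : ℝ => min u c) (Ici t) (Ici (min t c)) :=
      fun u hu => show min t c ≤ min u c from min_le_min hu le_rfl
    exact ContinuousWithinAt.comp (g := fun v => M v ω) (f := fun u : ℝ => min u c)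
      ((hcad ω).1 (min t c)) hmin hmap
  exact h1.sub h2

/-- sum of two 1-uniformly integrable families -/
lemma ui_add {f g : ℕ → Ω → ℝ} (hf : UniformIntegrable f 1 μ) (hg : UniformIntegrable g 1 μ) :
    UniformIntegrable (fun n ω => f n ω + g n ω) 1 μ := by
  obtain ⟨Cf, hCf⟩ := hf.2.2
  obtain ⟨Cg, hCg⟩ := hg.2.2
  refine ⟨fun n => (hf.1 n).add (hg.1 n), hf.2.1.add hg.2.1 le_rfl hf.1 hg.1, Cf + Cg, fun n => ?_⟩
  calc eLpNorm (fun ω => f n ω + g n ω) 1 μ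
      ≤ eLpNorm (f n) 1 μ + eLpNorm (g n) 1 μ := eLpNorm_add_le (hf.1 n) (hg.1 n) le_rfl
    _ ≤ Cf + Cg := by exact_mod_cast add_le_add (hCf n) (hCg n)

lemma ui_sub {f g : ℕ → Ω → ℝ} (hf : UniformIntegrable f 1 μ) (hg : UniformIntegrable g 1 μ) :
    UniformIntegrable (fun n ω => f n ω - g n ω) 1 μ := by
  have := ui_add hf (⟨fun n => (hg.1 n).neg, hg.2.1.neg, by
    obtain ⟨C, hC⟩ := hg.2.2
    exact ⟨C, fun n => by rw [show (-g) n = -(g n) from rfl, eLpNorm_neg]; exact hC n⟩⟩ :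
    UniformIntegrable (-g) 1 μ)
  simpa [sub_eq_add_neg] using this

/-- Vitali from uniform integrability + everywhere convergence -/
lemma vitali_ui {F : ℕ → Ω → ℝ} {G : Ω → ℝ} (hui : UniformIntegrable F 1 μ)
    (hG : AEStronglyMeasurable G μ)
    (h : ∀ ω, Tendsto (fun n => F n ω) atTop (nhds (G ω))) :
    Integrable G μ ∧ Tendsto (fun n => eLpNorm (F n - G) 1 μ) atTop (nhds 0) := by
  obtain ⟨C, hC⟩ := hui.2.2
  have hmem : MemLp G 1 μ := by
    refine ⟨hG, ?_⟩
    have hle : eLpNorm G 1 μ ≤ atTop.liminf fun k => eLpNorm (F k) 1 μ :=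
      MeasureTheory.Lp.eLpNorm_lim_le_liminf_eLpNorm (fun k => hui.1 k) _ (Eventually.of_forall h)
    refine lt_of_le_of_lt (hle.trans ?_) (ENNReal.coe_lt_top (r := C))
    exact Filter.liminf_le_of_frequently_le (Filter.Frequently.of_forall fun k => hC k)
  exact ⟨memLp_one_iff_integrable.1 hmem,
    tendsto_Lp_finite_of_tendsto_ae le_rfl ENNReal.one_ne_top (fun k => hui.1 k) hmem hui.2.1
      (Eventually.of_forall h)⟩

theorem stmt1' {Ω : Type*} {m : MeasurableSpace Ω} {μ : Measure Ω} [IsProbabilityMeasure μ]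
    (ℱ : Filtration ℝ m)
    (M : ℝ → Ω → ℝ) (hM : IsIncMart ℱ μ M)
    (τ : Ω → EReal) (hτ : IsStoppingTimeE ℱ τ) (hbot : ∀ ω, τ ω ≠ ⊥)
    (hui : UniformIntegrable
      (fun n : ℕ => fun ω =>
        M 0 ω - M ((min (0 : EReal) (max (τ ω) ((-(n + 1 : ℝ) : ℝ) : EReal))).toReal) ω)
      1 μ) :
    IsMart ℱ μ fun t ω => M t ω - stoppedE M τ t ω := by
  obtain ⟨hcad, hmart⟩ := hM
  set c : ℕ → ℝ := fun n => -(n + 1 : ℝ) with hc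
  set X : ℕ → ℝ → Ω → ℝ := fun n => incr M (c n) with hX
  have hXmart : ∀ n, Martingale (X n) ℱ μ := fun n => (hmart (c n)).1
  have hXint : ∀ n t, Integrable (X n t) μ := fun n => (hmart (c n)).2
  have hXrc : ∀ n ω t, ContinuousWithinAt (fun u => X n u ω) (Ici t) t := fun n =>
    incr_rc hcad (c n)
  set Nn : ℕ → ℝ → Ω → ℝ := fun n t ω => M t ω - M (piF τ (c n) t ω) ω with hNn
  set NL : ℝ → Ω → ℝ := fun t ω => M t ω - stoppedE M τ t ω with hNL
  have hst : ∀ n t, IsStoppingTime ℱ (wt (piF τ (c n) t)) := fun n t =>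
    piF_isStoppingTime ℱ hτ (c n) t
  have hNeq : ∀ n t, Nn n t = fun ω => X n t ω - stoppedValue (X n) (wt (piF τ (c n) t)) ω :=
    fun n t => funext fun ω => incr_eq M hbot (c n) t ω
  -- integrability of stopped values
  have hSVae : ∀ n t, stoppedValue (X n) (wt (piF τ (c n) t))
      =ᵐ[μ] μ[X n t | (hst n t).measurableSpace] := fun n t =>
    stoppedValue_ae_eq_condexp_stopping (hXmart n) (hXint n) (hXrc n) (hst n t) (piF_le τ _ t)
  have hSVint : ∀ n t, Integrable (stoppedValue (X n) (wt (piF τ (c n) t))) μ := fun n t =>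
    integrable_condExp.congr (hSVae n t).symm
  have hNint : ∀ n t, Integrable (Nn n t) μ := by
    intro n t; rw [hNeq n t]
    exact (hXint n t).sub (hSVint n t)
  -- strong measurability / adaptedness of Nn
  have hNSM : ∀ n t, StronglyMeasurable[ℱ t] (Nn n t) := by
    intro n t; rw [hNeq n t]
    refine StronglyMeasurable.sub ((hXmart n).stronglyAdapted t) ?_
    exact stronglyMeasurable_stoppedValue_of_le
      (progMeasurable_of_rc ℱ (hXmart n).stronglyAdapted (hXrc n)) (hst n t) (leb (piF_le τ _ t))
  -- per-n martingale property
  have hNmart : ∀ n (s t : ℝ), s ≤ t → μ[Nn n t | ℱ s] =ᵐ[μ] Nn n s := by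
    intro n s t hstle
    have h1 : μ[Nn n t | ℱ s] =ᵐ[μ]
        μ[X n t | ℱ s] - μ[stoppedValue (X n) (wt (piF τ (c n) t)) | ℱ s] := by
      rw [hNeq n t]
      exact condExp_sub (hXint n t) (hSVint n t) _
    have h2 : μ[X n t | ℱ s] =ᵐ[μ] X n s := (hXmart n).condExp_ae_eq hstle
    have h3 : μ[stoppedValue (X n) (wt (piF τ (c n) t)) | ℱ s]
        =ᵐ[μ] stoppedValue (X n) (wt fun ω => min (piF τ (c n) t ω) s) :=
      condexp_stoppedValue_min (hXmart n) (hXint n) (hXrc n) (hst n t) (piF_le τ _ t) s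
    have h4 : (stoppedValue (X n) (wt fun ω => min (piF τ (c n) t ω) s))
        = stoppedValue (X n) (wt (piF τ (c n) s)) := by
      simp only [← piF_min τ (c n) hstle]
    refine h1.trans ?_
    rw [hNeq n s, ← h4]
    exact h2.sub h3
  -- pointwise convergence
  have hNtend : ∀ t ω, Tendsto (fun n => Nn n t ω) atTop (nhds (NL t ω)) := by
    intro t ω
    refine Tendsto.congr' ?_ tendsto_const_nhds
    filter_upwards [piF_eventually τ hbot t ω] with n hn
    simp only [hNn, hNL, stoppedE, hc, hn]
  have hNLSM : ∀ t, StronglyMeasurable[ℱ t] (NL t) := by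
    intro t
    exact stronglyMeasurable_of_tendsto atTop (fun n => hNSM n t)
      (tendsto_pi_nhds.2 fun ω => hNtend t ω)
  -- L¹ convergence for t ≥ 0
  have hui0 : UniformIntegrable (fun n => Nn n 0) 1 μ := by
    have : (fun n : ℕ => fun ω =>
        M 0 ω - M ((min (0 : EReal) (max (τ ω) ((-(n + 1 : ℝ) : ℝ) : EReal))).toReal) ω)
        = fun n => Nn n 0 := by
      funext n ω
      simp only [hNn, piF, hc]
      norm_num
    rwa [this] at hui
  have hL1pos : ∀ t, 0 ≤ t →
      Integrable (NL t) μ ∧ Tendsto (fun n => eLpNorm (Nn n t - NL t) 1 μ) atTop (nhds 0) := by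
    intro t ht
    set ρ : ℕ → Ω → ℝ := fun n ω => max (piF τ (c n) t ω) 0 with hρ
    have hρst : ∀ n, IsStoppingTime ℱ (wt (ρ n)) := fun n => stmax (hst n t) 0
    have hρle : ∀ n ω, ρ n ω ≤ t := fun n ω => max_le (piF_le τ _ t ω) ht
    have hY := hmart 0
    have hYrc := incr_rc hcad (0 : ℝ)
    have hOSY : ∀ n, stoppedValue (incr M 0) (wt (ρ n))
        =ᵐ[μ] μ[incr M 0 t | (hρst n).measurableSpace] := fun n =>
      stoppedValue_ae_eq_condexp_stopping hY.1 hY.2 hYrc (hρst n) (hρle n)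
    have hUIY : UniformIntegrable (fun n => stoppedValue (incr M 0) (wt (ρ n))) 1 μ :=
      ((hY.2 t).uniformIntegrable_condExp fun n => (hρst n).measurableSpace_le).ae_eq
        fun n => (hOSY n).symm
    have hUIc : UniformIntegrable (fun _ : ℕ => incr M 0 t) 1 μ :=
      uniformIntegrable_const le_rfl ENNReal.one_ne_top (memLp_one_iff_integrable.2 (hY.2 t))
    have hdec : (fun n => Nn n t) = fun n ω => Nn n 0 ω +
        (incr M 0 t ω - stoppedValue (incr M 0) (wt (ρ n)) ω) := by
      funext n ω
      exact decomp_nonneg M hbot (c n) ht ω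
    have hUIt : UniformIntegrable (fun n => Nn n t) 1 μ := by
      rw [hdec]
      exact ui_add hui0 (ui_sub hUIc hUIY)
    exact vitali_ui hUIt ((hNLSM t).mono (ℱ.le t)).aestronglyMeasurable (hNtend t)
  -- L¹ convergence for all t
  have hL1 : ∀ t, Integrable (NL t) μ ∧
      Tendsto (fun n => eLpNorm (Nn n t - NL t) 1 μ) atTop (nhds 0) := by
    intro t
    rcases le_or_gt 0 t with ht | ht
    · exact hL1pos t ht
    · obtain ⟨hint0, hten0⟩ := hL1pos 0 le_rfl
      set g : Ω → ℝ := μ[NL 0 | ℱ t] with hg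
      have hgint : Integrable g μ := integrable_condExp
      have hbdd : ∀ n, eLpNorm (Nn n t - g) 1 μ ≤ eLpNorm (Nn n 0 - NL 0) 1 μ := by
        intro n
        have e1 : Nn n t - g =ᵐ[μ] μ[Nn n 0 - NL 0 | ℱ t] := by
          have e2 : μ[Nn n 0 - NL 0 | ℱ t] =ᵐ[μ] μ[Nn n 0 | ℱ t] - μ[NL 0 | ℱ t] :=
            condExp_sub (hNint n 0) hint0 _
          have e3 : μ[Nn n 0 | ℱ t] =ᵐ[μ] Nn n t := hNmart n t 0 ht.le
          filter_upwards [e2, e3] with ω h2 h3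
          simp only [Pi.sub_apply] at h2 ⊢
          rw [h2, h3]
        rw [eLpNorm_congr_ae e1]
        exact eLpNorm_one_condExp_le_eLpNorm _
      have hten : Tendsto (fun n => eLpNorm (Nn n t - g) 1 μ) atTop (nhds 0) := by
        refine tendsto_of_tendsto_of_tendsto_of_le_of_le tendsto_const_nhds hten0
          (fun n => zero_le) hbdd
      have haesm : ∀ n, AEStronglyMeasurable (Nn n t - g) μ := fun n =>
        (((hNSM n t).mono (ℱ.le t)).aestronglyMeasurable).sub
          (stronglyMeasurable_condExp.mono (ℱ.le t)).aestronglyMeasurable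
      have hfatou : eLpNorm (NL t - g) 1 μ ≤
          atTop.liminf fun n => eLpNorm (Nn n t - g) 1 μ := by
        refine MeasureTheory.Lp.eLpNorm_lim_le_liminf_eLpNorm haesm _ ?_
        refine Eventually.of_forall fun ω => ?_
        exact Tendsto.sub_const ((hNtend t ω)) _
      have hzero : eLpNorm (NL t - g) 1 μ = 0 := by
        refine le_antisymm ?_ (zero_le)
        rwa [hten.liminf_eq] at hfatou
      have haeeq : NL t =ᵐ[μ] g := by
        have := (eLpNorm_eq_zero_iff
          ((((hNLSM t).mono (ℱ.le t)).aestronglyMeasurable).sub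
            (stronglyMeasurable_condExp.mono (ℱ.le t)).aestronglyMeasurable) one_ne_zero).1 hzero
        filter_upwards [this] with ω hω
        have : NL t ω - g ω = 0 := hω
        linarith
      refine ⟨hgint.congr haeeq.symm, ?_⟩
      refine hten.congr fun n => ?_
      refine (eLpNorm_congr_ae ?_).symm
      filter_upwards [haeeq] with ω hω
      simp only [Pi.sub_apply, hω]
  -- conclusion
  refine ⟨⟨fun t => hNLSM t, fun s t hstle => ?_⟩, fun t => (hL1 t).1⟩
  -- martingale property in the limit
  have hkey : ∀ n, eLpNorm (NL s - μ[NL t | ℱ s]) 1 μ ≤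
      eLpNorm (NL s - Nn n s) 1 μ + eLpNorm (Nn n s - μ[NL t | ℱ s]) 1 μ := by
    intro n
    have : NL s - μ[NL t | ℱ s] = (NL s - Nn n s) + (Nn n s - μ[NL t | ℱ s]) := by
      funext ω; simp only [Pi.add_apply, Pi.sub_apply]; ring
    rw [this]
    refine eLpNorm_add_le ?_ ?_ le_rfl
    · exact (((hNLSM s).mono (ℱ.le s)).aestronglyMeasurable).sub
        (((hNSM n s).mono (ℱ.le s)).aestronglyMeasurable)
    · exact (((hNSM n s).mono (ℱ.le s)).aestronglyMeasurable).sub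
        (stronglyMeasurable_condExp.mono (ℱ.le s)).aestronglyMeasurable
  have hterm1 : Tendsto (fun n => eLpNorm (NL s - Nn n s) 1 μ) atTop (nhds 0) := by
    refine ((hL1 s).2).congr fun n => ?_
    rw [← eLpNorm_neg]
    congr 1
    funext ω; simp only [Pi.neg_apply, Pi.sub_apply]; ring
  have hterm2 : Tendsto (fun n => eLpNorm (Nn n s - μ[NL t | ℱ s]) 1 μ) atTop (nhds 0) := by
    have hbdd : ∀ n, eLpNorm (Nn n s - μ[NL t | ℱ s]) 1 μ ≤ eLpNorm (Nn n t - NL t) 1 μ := by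
      intro n
      have e1 : Nn n s - μ[NL t | ℱ s] =ᵐ[μ] μ[Nn n t - NL t | ℱ s] := by
        have e2 : μ[Nn n t - NL t | ℱ s] =ᵐ[μ] μ[Nn n t | ℱ s] - μ[NL t | ℱ s] :=
          condExp_sub (hNint n t) (hL1 t).1 _
        have e3 : μ[Nn n t | ℱ s] =ᵐ[μ] Nn n s := hNmart n s t hstle
        filter_upwards [e2, e3] with ω h2 h3
        simp only [Pi.sub_apply] at h2 ⊢
        rw [h2, h3]
      rw [eLpNorm_congr_ae e1]
      exact eLpNorm_one_condExp_le_eLpNorm _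
    exact tendsto_of_tendsto_of_tendsto_of_le_of_le tendsto_const_nhds
      (by simpa using ((hL1 t).2)) (fun n => zero_le) hbdd
  have hsum : Tendsto (fun n => eLpNorm (NL s - Nn n s) 1 μ
      + eLpNorm (Nn n s - μ[NL t | ℱ s]) 1 μ) atTop (nhds 0) := by
    simpa using hterm1.add hterm2
  have hzero : eLpNorm (NL s - μ[NL t | ℱ s]) 1 μ = 0 := by
    refine le_antisymm ?_ (zero_le)
    exact ge_of_tendsto hsum (Eventually.of_forall hkey)
  have := (eLpNorm_eq_zero_iff
    ((((hNLSM s).mono (ℱ.le s)).aestronglyMeasurable).sub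
      (stronglyMeasurable_condExp.mono (ℱ.le s)).aestronglyMeasurable) one_ne_zero).1 hzero
  symm
  filter_upwards [this] with ω hω
  have : NL s ω - (μ[NL t | ℱ s]) ω = 0 := hω
  linarith


end

end IncMartAux

/-- if `M` is an increment martingale, `τ` a stopping time and the family
`{M_0 - M_{(τ ∨ (-n)) ∧ 0} : n ≥ 1}` is uniformly integrable, then `(M_t - M_{t∧τ})_t`
is a martingale. -/
theorem stmt1 {Ω : Type*} {m : MeasurableSpace Ω} {μ : Measure Ω} [IsProbabilityMeasure μ]
    (ℱ : Filtration ℝ m) (hrc : RightContinuousFiltration ℱ) (hcpl : CompleteFiltration ℱ μ)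
    (M : ℝ → Ω → ℝ) (hM : IsIncMart ℱ μ M)
    (τ : Ω → EReal) (hτ : IsStoppingTimeE ℱ τ) (hbot : ∀ ω, τ ω ≠ ⊥)
    (hui : UniformIntegrable
      (fun n : ℕ => fun ω =>
        M 0 ω - M ((min (0 : EReal) (max (τ ω) ((-(n + 1 : ℝ) : ℝ) : EReal))).toReal) ω)
      1 μ) :
    IsMart ℱ μ fun t ω => M t ω - stoppedE M τ t ω :=
  IncMartAux.stmt1' ℱ M hM τ hτ hbot hui
end

section
/- For a càdlàg process M = (M_t)_{t∈ℝ}, the following are equivalent: (a) M_{−∞} := lim_{s→−∞} M_s exists a.s. and (M_t − M_{−∞})_t is a martingale; (b) M is an increment martingale and the family (M_0 − M_s)_{s<0} is uniformly integrable. -/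
open MeasureTheory Filter Set

section Stmt6Aux

open MeasureTheory Filter Set
open scoped ENNReal NNReal

variable {Ω : Type*} {m : MeasurableSpace Ω} {μ : Measure Ω} [IsProbabilityMeasure μ]
  {ℱ : Filtration ℝ m} {M : ℝ → Ω → ℝ}

private lemma stmt6_incr_eq (M : ℝ → Ω → ℝ) {u s : ℝ} (h : u ≤ s) :
    incr M u s = fun ω => M s ω - M u ω := by
  funext ω; simp [incr, min_eq_right h]

private lemma stmt6_incr_mart {Z : Ω → ℝ}
    (hmart : IsMart ℱ μ fun t ω => M t ω - Z ω) (s : ℝ) : IsMart ℱ μ (incr M s) := by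
  obtain ⟨⟨hadp, hmgale⟩, hint⟩ := hmart
  set N : ℝ → Ω → ℝ := fun t ω => M t ω - Z ω with hN
  have hkey : ∀ t, incr M s t = fun ω => N t ω - N (min t s) ω := by
    intro t; funext ω; simp only [incr, hN]; ring
  have hNcond : ∀ a b : ℝ, a ≤ b → μ[N (min b s)|ℱ a] =ᵐ[μ] N (min a s) := by
    intro a b hab
    rcases le_total s a with hsa | has
    · rw [min_eq_right (hsa.trans hab), min_eq_right hsa]
      rw [condExp_of_stronglyMeasurable (ℱ.le a) ((hadp s).mono (ℱ.mono hsa)) (hint s)]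
    · rw [min_eq_left has]
      exact hmgale a (min b s) (le_min hab has)
  refine ⟨⟨fun t => ?_, fun a b hab => ?_⟩, fun t => ?_⟩
  · rw [hkey]
    exact (hadp t).sub ((hadp (min t s)).mono (ℱ.mono (min_le_left t s)))
  · have h1 : μ[incr M s b|ℱ a] =ᵐ[μ] μ[N b|ℱ a] - μ[N (min b s)|ℱ a] := by
      rw [hkey]; exact condExp_sub (hint b) (hint (min b s)) _
    refine h1.trans ?_
    have h2 := hmgale a b hab
    have h3 := hNcond a b hab
    rw [hkey]
    filter_upwards [h2, h3] with ω h2 h3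
    simp only [Pi.sub_apply, h2, h3]
  · rw [hkey]
    exact (hint t).sub (hint (min t s))

private lemma stmt6_dirA (hcad : ∀ ω, Cadlag fun t => M t ω) {Z : Ω → ℝ}
    (hmart : IsMart ℱ μ fun t ω => M t ω - Z ω) :
    IsIncMart ℱ μ M ∧
      UniformIntegrable (fun s : Set.Iio (0:ℝ) => fun ω => M 0 ω - M (s : ℝ) ω) 1 μ := by
  obtain ⟨⟨hadp, hmgale⟩, hint⟩ := id hmart
  refine ⟨⟨hcad, fun s => stmt6_incr_mart hmart s⟩, ?_⟩
  set N : ℝ → Ω → ℝ := fun t ω => M t ω - Z ω with hN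
  have hui1 : UniformIntegrable (fun s : Set.Iio (0:ℝ) => μ[N 0|ℱ (s:ℝ)]) 1 μ :=
    (hint 0).uniformIntegrable_condExp fun s => ℱ.le _
  have huiC : UniformIntegrable (fun _ : Set.Iio (0:ℝ) => N 0) 1 μ :=
    uniformIntegrable_const le_rfl ENNReal.one_ne_top (memLp_one_iff_integrable.2 (hint 0))
  have hui : UniformIntegrable
      (fun s : Set.Iio (0:ℝ) => fun ω => N 0 ω - (μ[N 0|ℱ (s:ℝ)]) ω) 1 μ := by
    refine ⟨fun s => (huiC.1 s).sub (hui1.1 s), ?_, ?_⟩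
    · have h := huiC.2.1.sub hui1.2.1 le_rfl (fun s => huiC.1 s) (fun s => hui1.1 s)
      exact h
    · obtain ⟨C1, hC1⟩ := huiC.2.2
      obtain ⟨C2, hC2⟩ := hui1.2.2
      refine ⟨C1 + C2, fun s => ?_⟩
      refine (eLpNorm_sub_le (huiC.1 s) (hui1.1 s) le_rfl).trans ?_
      calc eLpNorm (N 0) 1 μ + eLpNorm (μ[N 0|ℱ (s:ℝ)]) 1 μ ≤ (C1 : ℝ≥0∞) + C2 :=
            add_le_add (hC1 s) (hC2 s)
        _ = ((C1 + C2 : ℝ≥0) : ℝ≥0∞) := by rw [ENNReal.coe_add]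
  refine hui.ae_eq fun s => ?_
  filter_upwards [hmgale (s : ℝ) 0 (le_of_lt s.2)] with ω hω
  rw [hω]; simp only [hN]
  ring


private lemma stmt6_Dint (hM : IsIncMart ℱ μ M) {u s : ℝ} (h : u ≤ s) :
    Integrable (fun ω => M s ω - M u ω) μ := by
  have h2 := (hM.2 u).2 s
  rwa [stmt6_incr_eq M h] at h2

private lemma stmt6_Dmeas (hM : IsIncMart ℱ μ M) {u s : ℝ} (h : u ≤ s) :
    StronglyMeasurable[ℱ s] (fun ω => M s ω - M u ω) := by
  have h2 := (hM.2 u).1.1 s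
  rwa [stmt6_incr_eq M h] at h2

private lemma stmt6_Dcond (hM : IsIncMart ℱ μ M) {u a b : ℝ} (hua : u ≤ a) (hab : a ≤ b) :
    μ[fun ω => M b ω - M u ω|ℱ a] =ᵐ[μ] fun ω => M a ω - M u ω := by
  have h2 := (hM.2 u).1.2 a b hab
  rwa [stmt6_incr_eq M (hua.trans hab), stmt6_incr_eq M hua] at h2

private lemma stmt6_Xint (hM : IsIncMart ℱ μ M) (t : ℝ) :
    Integrable (fun ω => M 0 ω - M t ω) μ := by
  rcases le_total t 0 with h | h
  · exact stmt6_Dint hM h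
  · have h2 := (stmt6_Dint hM h).neg
    have h3 : (-fun ω => M t ω - M 0 ω) = fun ω => M 0 ω - M t ω := by
      funext ω; simp only [Pi.neg_apply]; ring
    rwa [h3] at h2

private lemma stmt6_sq_integral {f : Ω → ℝ} (hf : Integrable f μ)
    (hff : Integrable (fun ω => f ω * f ω) μ) :
    (∫ ω, |f ω| ∂μ) * (∫ ω, |f ω| ∂μ) ≤ ∫ ω, f ω * f ω ∂μ := by
  set c := ∫ ω, |f ω| ∂μ with hc
  have hrw : (fun ω => (|f ω| - c) * (|f ω| - c))
      = fun ω => (f ω * f ω - 2 * c * |f ω|) + c * c := by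
    funext ω
    have h := abs_mul_abs_self (f ω)
    nlinarith [h]
  have hint2 : Integrable (fun ω => f ω * f ω - 2 * c * |f ω|) μ :=
    hff.sub (hf.abs.const_mul (2 * c))
  have h0 : (0:ℝ) ≤ ∫ ω, (|f ω| - c) * (|f ω| - c) ∂μ :=
    integral_nonneg fun ω => mul_self_nonneg _
  have hexp : ∫ ω, (|f ω| - c) * (|f ω| - c) ∂μ
      = (∫ ω, f ω * f ω ∂μ) - 2 * c * c + c * c := by
    rw [hrw, integral_add hint2 (integrable_const _), integral_sub hff (hf.abs.const_mul (2 * c)),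
      integral_const_mul, integral_const]
    simp only [measure_univ, probReal_univ, ENNReal.toReal_one, one_smul, ← hc]
  linarith [hexp ▸ h0]

private lemma stmt6_eLpNorm_le {f : Ω → ℝ} (hf : Integrable f μ) {ε : ℝ} (hε : 0 ≤ ε)
    (h : eLpNorm f 1 μ ≤ ENNReal.ofReal ε) : ∫ ω, |f ω| ∂μ ≤ ε := by
  have h1 : eLpNorm f 1 μ = ENNReal.ofReal (∫ ω, ‖f ω‖ ∂μ) := by
    rw [eLpNorm_one_eq_lintegral_enorm, ← ofReal_integral_norm_eq_lintegral_enorm hf]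
  rw [h1, ENNReal.ofReal_le_ofReal_iff hε] at h
  simpa [Real.norm_eq_abs] using h

private lemma stmt6_cauchy (hM : IsIncMart ℱ μ M)
    (hUI : UniformIntegrable (fun s : Set.Iio (0:ℝ) => fun ω => M 0 ω - M (s : ℝ) ω) 1 μ) :
    ∀ ε : ℝ, 0 < ε → ∃ S : ℝ, S < 0 ∧ ∀ u, u ≤ S → ∫ ω, |M S ω - M u ω| ∂μ ≤ ε := by
  by_contra hcon
  push_neg at hcon
  obtain ⟨ε, hε, hneg⟩ := hcon
  choose g hg1 hg2 using hneg
  let f : {x : ℝ // x < 0} → {x : ℝ // x < 0} :=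
    fun S => ⟨g S.1 S.2, lt_of_le_of_lt (hg1 S.1 S.2) S.2⟩
  let T : ℕ → {x : ℝ // x < 0} := fun n => f^[n] ⟨-1, by norm_num⟩
  have hTsucc : ∀ n, T (n + 1) = f (T n) := fun n => Function.iterate_succ_apply' f n _
  have hTstep : ∀ n, (T (n + 1)).1 ≤ (T n).1 := fun n => by
    rw [hTsucc]; exact hg1 _ _
  have hTd : ∀ n, ε < ∫ ω, |M (T n).1 ω - M (T (n + 1)).1 ω| ∂μ := fun n => by
    rw [hTsucc]; exact hg2 _ _
  have hTanti : Antitone fun n => (T n).1 := antitone_nat_of_succ_le hTstep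
  obtain ⟨C, hC⟩ := hUI.spec one_ne_zero ENNReal.one_ne_top (show (0:ℝ) < ε/4 by linarith)
  have key : ∀ N : ℕ, (N : ℝ) * (ε/2 * (ε/2)) ≤ (C : ℝ) * C := by
    intro N
    set W : Ω → ℝ := fun ω => M 0 ω - M (T N).1 ω with hWdef
    have hWint : Integrable W μ := stmt6_Xint hM _
    have hWsm : StronglyMeasurable W := by
      have h2 := stmt6_Dmeas hM (le_of_lt (T N).2)
      exact h2.mono (ℱ.le 0)
    set A : Set Ω := {ω | C ≤ ‖W ω‖₊} with hAdef
    have hAmeas : MeasurableSet A :=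
      measurableSet_le measurable_const hWsm.measurable.nnnorm
    set V : Ω → ℝ := fun ω => W ω - A.indicator W ω with hVdef
    have hVband : ∀ ω, |V ω| ≤ C := by
      intro ω
      by_cases h : ω ∈ A
      · simp [hVdef, Set.indicator_of_mem h]
      · simp only [hVdef, Set.indicator_of_notMem h, sub_zero]
        have h2 : ¬ (C ≤ ‖W ω‖₊) := h
        have h3 : ‖W ω‖₊ ≤ C := le_of_not_ge h2
        calc |W ω| = ‖W ω‖ := (Real.norm_eq_abs _).symm
          _ ≤ C := by exact_mod_cast h3
    have hVsm : StronglyMeasurable V := hWsm.sub (hWsm.indicator hAmeas)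
    have hVint : Integrable V μ := hWint.sub (hWint.indicator hAmeas)
    have hWVint : Integrable (fun ω => W ω - V ω) μ := hWint.sub hVint
    have hWV : ∫ ω, |W ω - V ω| ∂μ ≤ ε/4 := by
      have h2 := hC ⟨(T N).1, (T N).2⟩
      have h4 : ∫ ω, |W ω - V ω| ∂μ = ∫ ω, |A.indicator W ω| ∂μ := by
        refine integral_congr_ae (Filter.Eventually.of_forall fun ω => ?_)
        simp [hVdef]
      rw [h4]
      exact stmt6_eLpNorm_le (hWint.indicator hAmeas) (by linarith) h2
    -- conditional expectations along the chain
    set y : ℕ → Ω → ℝ := fun k => μ[V|ℱ (T k).1] with hydef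
    have hybdd : ∀ k, ∀ᵐ ω ∂μ, |y k ω| ≤ C := fun k =>
      ae_bdd_condExp_of_ae_bdd (Filter.Eventually.of_forall hVband)
    have hyint : ∀ k, Integrable (y k) μ := fun k => integrable_condExp
    have hyaesm : ∀ k, AEStronglyMeasurable (y k) μ := fun k => (hyint k).1
    have hymul : ∀ k l, Integrable (fun ω => y k ω * y l ω) μ := fun k l =>
      Integrable.bdd_mul (hyint l) (hyaesm k)
        (by filter_upwards [hybdd k] with ω h; rwa [Real.norm_eq_abs])
    have hGle : ∀ k, (ℱ (T (k + 1)).1 : MeasurableSpace Ω) ≤ ℱ (T k).1 :=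
      fun k => ℱ.mono (hTstep k)
    have hcross : ∀ k, ∫ ω, y k ω * y (k + 1) ω ∂μ = ∫ ω, y (k + 1) ω * y (k + 1) ω ∂μ := by
      intro k
      have htow : y (k + 1) =ᵐ[μ] μ[y k|ℱ (T (k + 1)).1] :=
        (condExp_condExp_of_le (hGle k) (ℱ.le _)).symm
      have hmulint : Integrable (y (k + 1) * y k) μ := by
        have := hymul (k + 1) k
        exact this
      have hpull : μ[y (k + 1) * y k|ℱ (T (k + 1)).1]
          =ᵐ[μ] y (k + 1) * μ[y k|ℱ (T (k + 1)).1] :=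
        condExp_mul_of_stronglyMeasurable_left stronglyMeasurable_condExp hmulint (hyint k)
      calc ∫ ω, y k ω * y (k + 1) ω ∂μ = ∫ ω, (y (k + 1) * y k) ω ∂μ := by
            refine integral_congr_ae (Filter.Eventually.of_forall fun ω => ?_)
            simp only [Pi.mul_apply]
            exact mul_comm _ _
        _ = ∫ ω, (μ[y (k + 1) * y k|ℱ (T (k + 1)).1]) ω ∂μ :=
            (integral_condExp (ℱ.le _)).symm
        _ = ∫ ω, (y (k + 1) * μ[y k|ℱ (T (k + 1)).1]) ω ∂μ := integral_congr_ae hpull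
        _ = ∫ ω, y (k + 1) ω * y (k + 1) ω ∂μ := by
            refine integral_congr_ae ?_
            filter_upwards [htow] with ω h
            simp only [Pi.mul_apply]
            rw [← h]
    set a : ℕ → ℝ := fun k => ∫ ω, y k ω * y k ω ∂μ with hadef
    set e : ℕ → Ω → ℝ := fun k ω => y k ω - y (k + 1) ω with hedef
    have heint : ∀ k, Integrable (e k) μ := fun k => (hyint k).sub (hyint (k + 1))
    have hemul : ∀ k, Integrable (fun ω => e k ω * e k ω) μ := by
      intro k
      have h2 : (fun ω => e k ω * e k ω) = fun ω =>
          (y k ω * y k ω - y k ω * y (k + 1) ω) - (y (k+1) ω * y k ω - y (k+1) ω * y (k+1) ω) := by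
        funext ω; simp only [hedef]; ring
      rw [h2]
      exact ((hymul k k).sub (hymul k (k+1))).sub ((hymul (k+1) k).sub (hymul (k+1) (k+1)))
    have htel : ∀ k, ∫ ω, e k ω * e k ω ∂μ = a k - a (k + 1) := by
      intro k
      have i1 : Integrable (fun ω => y k ω * y k ω - y k ω * y (k + 1) ω) μ :=
        (hymul k k).sub (hymul k (k + 1))
      have i2 : Integrable (fun ω => y (k + 1) ω * y k ω - y (k + 1) ω * y (k + 1) ω) μ :=
        (hymul (k + 1) k).sub (hymul (k + 1) (k + 1))
      have h5 : ∫ ω, e k ω * e k ω ∂μ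
          = ∫ ω, ((y k ω * y k ω - y k ω * y (k + 1) ω)
              - (y (k + 1) ω * y k ω - y (k + 1) ω * y (k + 1) ω)) ∂μ := by
        refine integral_congr_ae (Filter.Eventually.of_forall fun ω => ?_)
        simp only [hedef]; ring
      rw [h5, integral_sub i1 i2, integral_sub (hymul k k) (hymul k (k + 1)),
        integral_sub (hymul (k + 1) k) (hymul (k + 1) (k + 1))]
      have hc2 : ∫ ω, y (k + 1) ω * y k ω ∂μ = ∫ ω, y k ω * y (k + 1) ω ∂μ := by
        refine integral_congr_ae (Filter.Eventually.of_forall fun ω => ?_)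
        exact mul_comm _ _
      simp only [hadef]
      rw [hc2, hcross k]
      ring
    -- lower bound on increments
    have hk0 : ∀ k, k ≤ N → μ[W|ℱ (T k).1] =ᵐ[μ] fun ω => M (T k).1 ω - M (T N).1 ω := by
      intro k hkN
      exact stmt6_Dcond hM (hTanti hkN) (le_of_lt (T k).2)
    have hlb : ∀ k, k + 1 ≤ N → ε/2 ≤ ∫ ω, |e k ω| ∂μ := by
      intro k hkN
      set d : Ω → ℝ := fun ω => M (T k).1 ω - M (T (k + 1)).1 ω with hddef
      have hdint : Integrable d μ := stmt6_Dint hM (hTstep k)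
      have hdae : d =ᵐ[μ] fun ω => (μ[W|ℱ (T k).1]) ω - (μ[W|ℱ (T (k + 1)).1]) ω := by
        filter_upwards [hk0 k (le_trans (Nat.le_succ k) hkN), hk0 (k + 1) hkN] with ω h1 h2
        simp only [hddef, h1, h2]
        ring
      have hsub1 : μ[fun ω => W ω - V ω|ℱ (T k).1] =ᵐ[μ] μ[W|ℱ (T k).1] - μ[V|ℱ (T k).1] :=
        condExp_sub hWint hVint _
      have hsub2 : μ[fun ω => W ω - V ω|ℱ (T (k+1)).1]
          =ᵐ[μ] μ[W|ℱ (T (k+1)).1] - μ[V|ℱ (T (k+1)).1] :=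
        condExp_sub hWint hVint _
      have hde : (fun ω => d ω - e k ω) =ᵐ[μ]
          fun ω => (μ[fun ω' => W ω' - V ω'|ℱ (T k).1]) ω
            - (μ[fun ω' => W ω' - V ω'|ℱ (T (k+1)).1]) ω := by
        filter_upwards [hdae, hsub1, hsub2] with ω h1 h2 h3
        simp only [Pi.sub_apply] at h2 h3
        simp only [hedef, h1, h2, h3, hydef]
        ring
      have hdei : ∫ ω, |d ω - e k ω| ∂μ ≤ ε/2 := by
        have hint1 : Integrable (μ[fun ω' => W ω' - V ω'|ℱ (T k).1]) μ := integrable_condExp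
        have hint2 : Integrable (μ[fun ω' => W ω' - V ω'|ℱ (T (k+1)).1]) μ := integrable_condExp
        calc ∫ ω, |d ω - e k ω| ∂μ
            = ∫ ω, |(μ[fun ω' => W ω' - V ω'|ℱ (T k).1]) ω
                - (μ[fun ω' => W ω' - V ω'|ℱ (T (k+1)).1]) ω| ∂μ := by
              refine integral_congr_ae ?_
              filter_upwards [hde] with ω h
              rw [h]
          _ ≤ ∫ ω, (|(μ[fun ω' => W ω' - V ω'|ℱ (T k).1]) ω|
                + |(μ[fun ω' => W ω' - V ω'|ℱ (T (k+1)).1]) ω|) ∂μ := by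
              refine integral_mono ((hint1.sub hint2).abs) (hint1.abs.add hint2.abs) ?_
              intro ω
              exact abs_sub _ _
          _ = (∫ ω, |(μ[fun ω' => W ω' - V ω'|ℱ (T k).1]) ω| ∂μ)
                + ∫ ω, |(μ[fun ω' => W ω' - V ω'|ℱ (T (k+1)).1]) ω| ∂μ :=
              integral_add hint1.abs hint2.abs
          _ ≤ (∫ ω, |W ω - V ω| ∂μ) + ∫ ω, |W ω - V ω| ∂μ :=
              add_le_add (integral_abs_condExp_le _) (integral_abs_condExp_le _)
          _ ≤ ε/4 + ε/4 := add_le_add hWV hWV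
          _ = ε/2 := by ring
      have htri : ∫ ω, |d ω| ∂μ ≤ (∫ ω, |e k ω| ∂μ) + ∫ ω, |d ω - e k ω| ∂μ := by
        have i3 : Integrable (fun ω => |e k ω| + |d ω - e k ω|) μ :=
          (heint k).abs.add (hdint.sub (heint k)).abs
        have h6 : ∫ ω, |d ω| ∂μ ≤ ∫ ω, (|e k ω| + |d ω - e k ω|) ∂μ := by
          refine integral_mono hdint.abs i3 fun ω => ?_
          have h7 : d ω = e k ω + (d ω - e k ω) := by ring
          calc |d ω| = |e k ω + (d ω - e k ω)| := by rw [← h7]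
            _ ≤ |e k ω| + |d ω - e k ω| := abs_add_le _ _
        have h8 : ∫ ω, (|e k ω| + |d ω - e k ω|) ∂μ
            = (∫ ω, |e k ω| ∂μ) + ∫ ω, |d ω - e k ω| ∂μ :=
          integral_add (heint k).abs (hdint.sub (heint k)).abs
        linarith
      have hdlow := hTd k
      linarith
    -- combine
    have hsum : ∑ k ∈ Finset.range N, ∫ ω, e k ω * e k ω ∂μ = a 0 - a N := by
      rw [Finset.sum_congr rfl fun k _ => htel k]
      exact Finset.sum_range_sub' a N
    have haN : 0 ≤ a N := integral_nonneg fun ω => mul_self_nonneg _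
    have ha0 : a 0 ≤ (C : ℝ) * C := by
      have h2 : ∀ᵐ ω ∂μ, y 0 ω * y 0 ω ≤ (C : ℝ) * C := by
        filter_upwards [hybdd 0] with ω h
        calc y 0 ω * y 0 ω = |y 0 ω| * |y 0 ω| := (abs_mul_abs_self _).symm
          _ ≤ (C : ℝ) * C := mul_le_mul h h (abs_nonneg _) C.2
      calc a 0 ≤ ∫ _ω, (C : ℝ) * C ∂μ := integral_mono_ae (hymul 0 0) (integrable_const _) h2
        _ = (C : ℝ) * C := by simp [measure_univ]
    have hterm : ∀ k, k + 1 ≤ N → ε/2 * (ε/2) ≤ ∫ ω, e k ω * e k ω ∂μ := by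
      intro k hkN
      have h2 := hlb k hkN
      have h3 := stmt6_sq_integral (heint k) (hemul k)
      have h4 : ε/2 * (ε/2) ≤ (∫ ω, |e k ω| ∂μ) * ∫ ω, |e k ω| ∂μ := by
        have hε2 : (0:ℝ) ≤ ε/2 := by linarith
        exact mul_le_mul h2 h2 hε2 (le_trans hε2 h2)
      linarith
    calc (N : ℝ) * (ε/2 * (ε/2)) = ∑ _k ∈ Finset.range N, (ε/2 * (ε/2)) := by
          rw [Finset.sum_const, Finset.card_range, nsmul_eq_mul]
      _ ≤ ∑ k ∈ Finset.range N, ∫ ω, e k ω * e k ω ∂μ := by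
          refine Finset.sum_le_sum fun k hk => hterm k ?_
          exact Nat.succ_le_of_lt (Finset.mem_range.1 hk)
      _ = a 0 - a N := hsum
      _ ≤ (C : ℝ) * C := by linarith
  obtain ⟨N, hN⟩ := exists_nat_gt ((C : ℝ) * C / (ε/2 * (ε/2)))
  have hpos : (0:ℝ) < ε/2 * (ε/2) := by positivity
  have h2 := key N
  rw [div_lt_iff₀ hpos] at hN
  linarith


private lemma stmt6_eLpNorm_eq {f : Ω → ℝ} (hf : Integrable f μ) :
    eLpNorm f 1 μ = ENNReal.ofReal (∫ ω, |f ω| ∂μ) := by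
  rw [eLpNorm_one_eq_lintegral_enorm, ← ofReal_integral_norm_eq_lintegral_enorm hf]
  simp only [Real.norm_eq_abs]

private lemma stmt6_abs_sym (M : ℝ → Ω → ℝ) (x y : ℝ) :
    ∫ ω, |M x ω - M y ω| ∂μ = ∫ ω, |M y ω - M x ω| ∂μ := by
  refine integral_congr_ae (Filter.Eventually.of_forall fun ω => ?_)
  exact abs_sub_comm _ _

private lemma stmt6_cauchy2 (hM : IsIncMart ℱ μ M)
    (hUI : UniformIntegrable (fun s : Set.Iio (0:ℝ) => fun ω => M 0 ω - M (s : ℝ) ω) 1 μ) :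
    ∀ ε : ℝ, 0 < ε → ∃ S : ℝ, S < 0 ∧ ∀ u s, u ≤ s → s ≤ S →
      ∫ ω, |M s ω - M u ω| ∂μ ≤ ε := by
  intro ε hε
  obtain ⟨S, hS, h⟩ := stmt6_cauchy hM hUI ε hε
  refine ⟨S, hS, fun u s hus hsS => ?_⟩
  have hcond := stmt6_Dcond hM hus hsS
  calc ∫ ω, |M s ω - M u ω| ∂μ
      = ∫ ω, |(μ[fun ω' => M S ω' - M u ω'|ℱ s]) ω| ∂μ := by
        refine integral_congr_ae ?_
        filter_upwards [hcond] with ω h2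
        rw [h2]
    _ ≤ ∫ ω, |M S ω - M u ω| ∂μ := integral_abs_condExp_le _
    _ ≤ ε := h u (hus.trans hsS)

private lemma stmt6_limit (hM : IsIncMart ℱ μ M)
    (hUI : UniformIntegrable (fun s : Set.Iio (0:ℝ) => fun ω => M 0 ω - M (s : ℝ) ω) 1 μ) :
    ∃ ξ : Ω → ℝ, Integrable ξ μ ∧
      ∀ ε : ℝ, 0 < ε → ∃ S : ℝ, S < 0 ∧ ∀ s, s ≤ S →
        ∫ ω, |M 0 ω - M s ω - ξ ω| ∂μ ≤ ε := by
  have hXint : ∀ t : ℝ, Integrable (fun ω => M 0 ω - M t ω) μ := stmt6_Xint hM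
  have hXmem : ∀ t : ℝ, MemLp (fun ω => M 0 ω - M t ω) 1 μ :=
    fun t => memLp_one_iff_integrable.2 (hXint t)
  have hrn : ∀ n : ℕ, ∃ ρ : ℝ, ρ < 0 ∧ ρ ≤ -(n:ℝ) ∧ ∀ u s, u ≤ s → s ≤ ρ →
      ∫ ω, |M s ω - M u ω| ∂μ ≤ 1/(n+1) := by
    intro n
    obtain ⟨S, hS, h⟩ := stmt6_cauchy2 hM hUI (1/(n+1)) (by positivity)
    exact ⟨min S (-(n:ℝ)), lt_of_le_of_lt (min_le_left _ _) hS, min_le_right _ _,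
      fun u s hus hsr => h u s hus (hsr.trans (min_le_left _ _))⟩
  choose r hr0 hrle hrprop using hrn
  set φ : ℕ → Lp ℝ 1 μ := fun n => (hXmem (r n)).toLp _ with hφdef
  have hφcoe : ∀ n, ⇑(φ n) =ᵐ[μ] fun ω => M 0 ω - M (r n) ω := fun n => MemLp.coeFn_toLp _
  have hrbig : ∀ j n : ℕ, ⌈-r j⌉₊ ≤ n → r n ≤ r j := by
    intro j n hn
    have h1 : -r j ≤ (n:ℝ) := by
      have h2 := Nat.le_ceil (-r j)
      have h3 : ((⌈-r j⌉₊ : ℕ) : ℝ) ≤ (n : ℝ) := by exact_mod_cast hn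
      linarith
    have h2 := hrle n
    linarith
  have hcau : CauchySeq φ := by
    rw [Metric.cauchySeq_iff']
    intro ε hε
    obtain ⟨j, hj⟩ := exists_nat_one_div_lt hε
    refine ⟨⌈-r j⌉₊, fun n hn => ?_⟩
    have hrn' : r n ≤ r j := hrbig j n hn
    have hrN : r ⌈-r j⌉₊ ≤ r j := hrbig j _ le_rfl
    have hint : Integrable (fun ω => M (r ⌈-r j⌉₊) ω - M (r n) ω) μ := by
      rcases le_total (r n) (r ⌈-r j⌉₊) with h | h
      · exact stmt6_Dint hM h
      · have h2 := (stmt6_Dint hM h).neg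
        have h3 : (-fun ω => M (r n) ω - M (r ⌈-r j⌉₊) ω)
            = fun ω => M (r ⌈-r j⌉₊) ω - M (r n) ω := by
          funext ω; simp only [Pi.neg_apply]; ring
        rwa [h3] at h2
    have hd : dist (φ n) (φ ⌈-r j⌉₊) = ∫ ω, |M (r ⌈-r j⌉₊) ω - M (r n) ω| ∂μ := by
      rw [Lp.dist_def]
      have h1 : eLpNorm (⇑(φ n) - ⇑(φ ⌈-r j⌉₊)) 1 μ
          = eLpNorm (fun ω => M (r ⌈-r j⌉₊) ω - M (r n) ω) 1 μ := by
        refine eLpNorm_congr_ae ?_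
        filter_upwards [hφcoe n, hφcoe ⌈-r j⌉₊] with ω h2 h3
        simp only [Pi.sub_apply, h2, h3]
        ring
      rw [h1, stmt6_eLpNorm_eq hint,
        ENNReal.toReal_ofReal (integral_nonneg fun ω => abs_nonneg _)]
    rw [hd]
    have hbound : ∫ ω, |M (r ⌈-r j⌉₊) ω - M (r n) ω| ∂μ ≤ 1/(j+1) := by
      rcases le_total (r n) (r ⌈-r j⌉₊) with h | h
      · exact hrprop j (r n) (r ⌈-r j⌉₊) h hrN
      · rw [stmt6_abs_sym]
        exact hrprop j (r ⌈-r j⌉₊) (r n) h hrn'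
    exact lt_of_le_of_lt hbound hj
  obtain ⟨Φ, hΦ⟩ := cauchySeq_tendsto_of_complete hcau
  have hξint : Integrable (⇑Φ) μ := memLp_one_iff_integrable.1 (Lp.memLp Φ)
  refine ⟨⇑Φ, hξint, fun ε hε => ?_⟩
  obtain ⟨S', hS', hS'p⟩ := stmt6_cauchy2 hM hUI (ε/2) (by linarith)
  obtain ⟨N₁, hN₁⟩ := Metric.tendsto_atTop.1 hΦ (ε/2) (by linarith)
  set n := max N₁ ⌈-S'⌉₊ with hn
  have hrnS' : r n ≤ S' := by
    have h1 : -S' ≤ (n:ℝ) := by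
      have h2 := Nat.le_ceil (-S')
      have h3 : ((⌈-S'⌉₊ : ℕ) : ℝ) ≤ (n : ℝ) := by exact_mod_cast le_max_right N₁ ⌈-S'⌉₊
      linarith
    have h2 := hrle n
    linarith
  have i4 : Integrable (fun ω => M 0 ω - M (r n) ω - Φ ω) μ := (hXint (r n)).sub hξint
  have hd2 : dist (φ n) Φ = ∫ ω, |M 0 ω - M (r n) ω - Φ ω| ∂μ := by
    rw [Lp.dist_def]
    have h1 : eLpNorm (⇑(φ n) - ⇑Φ) 1 μ
        = eLpNorm (fun ω => M 0 ω - M (r n) ω - Φ ω) 1 μ := by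
      refine eLpNorm_congr_ae ?_
      filter_upwards [hφcoe n] with ω h2
      simp only [Pi.sub_apply, h2]
    rw [h1, stmt6_eLpNorm_eq i4,
      ENNReal.toReal_ofReal (integral_nonneg fun ω => abs_nonneg _)]
  refine ⟨r n, hr0 n, fun s hs => ?_⟩
  have i5 : Integrable (fun ω => M (r n) ω - M s ω) μ := stmt6_Dint hM hs
  have i6 : Integrable (fun ω => M 0 ω - M s ω - Φ ω) μ := (hXint s).sub hξint
  have h6 : ∫ ω, |M 0 ω - M s ω - Φ ω| ∂μ
      ≤ ∫ ω, (|M (r n) ω - M s ω| + |M 0 ω - M (r n) ω - Φ ω|) ∂μ := by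
    refine integral_mono i6.abs (i5.abs.add i4.abs) fun ω => ?_
    have h7 : M 0 ω - M s ω - Φ ω
        = (M (r n) ω - M s ω) + (M 0 ω - M (r n) ω - Φ ω) := by ring
    rw [h7]
    exact abs_add_le _ _
  have h7 : ∫ ω, (|M (r n) ω - M s ω| + |M 0 ω - M (r n) ω - Φ ω|) ∂μ
      = (∫ ω, |M (r n) ω - M s ω| ∂μ) + ∫ ω, |M 0 ω - M (r n) ω - Φ ω| ∂μ :=
    integral_add i5.abs i4.abs
  have h8 : ∫ ω, |M (r n) ω - M s ω| ∂μ ≤ ε/2 := hS'p s (r n) hs hrnS'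
  have h9 : ∫ ω, |M 0 ω - M (r n) ω - Φ ω| ∂μ ≤ ε/2 := by
    rw [← hd2]
    exact le_of_lt (hN₁ n (le_max_left _ _))
  linarith


private lemma stmt6_sm_of_ae_eq (hcpl : CompleteFiltration ℱ μ) {t : ℝ} {f g : Ω → ℝ}
    (hg : StronglyMeasurable[ℱ t] g) (hfg : f =ᵐ[μ] g) : StronglyMeasurable[ℱ t] f := by
  have hnull : μ {ω | ¬ f ω = g ω} = 0 := ae_iff.1 hfg
  have hmeas : Measurable[ℱ t] f := by
    intro B hB
    have h1 : MeasurableSet[ℱ t] (g ⁻¹' B) := hg.measurable hB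
    have hD1 : MeasurableSet[ℱ t] (f ⁻¹' B \ g ⁻¹' B) := by
      refine hcpl t _ (measure_mono_null ?_ hnull)
      intro ω hω
      simp only [Set.mem_diff, Set.mem_preimage] at hω
      simp only [Set.mem_setOf_eq]
      intro h
      exact hω.2 (by rw [← h]; exact hω.1)
    have hD2 : MeasurableSet[ℱ t] (g ⁻¹' B \ f ⁻¹' B) := by
      refine hcpl t _ (measure_mono_null ?_ hnull)
      intro ω hω
      simp only [Set.mem_diff, Set.mem_preimage] at hω
      simp only [Set.mem_setOf_eq]
      intro h
      exact hω.2 (by rw [h]; exact hω.1)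
    have hset : f ⁻¹' B = (g ⁻¹' B \ (g ⁻¹' B \ f ⁻¹' B)) ∪ (f ⁻¹' B \ g ⁻¹' B) := by
      ext ω
      by_cases h1' : ω ∈ f ⁻¹' B <;> by_cases h2' : ω ∈ g ⁻¹' B <;>
        simp [h1', h2']
    rw [hset]
    exact (h1.diff hD2).union hD1
  exact hmeas.stronglyMeasurable

private lemma stmt6_ae_zero {f : Ω → ℝ} (hf : Integrable f μ)
    (h : ∀ δ : ℝ, 0 < δ → ∫ ω, |f ω| ∂μ ≤ δ) : f =ᵐ[μ] 0 := by
  have h0 : ∫ ω, |f ω| ∂μ = 0 := by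
    by_contra hne
    have hpos : 0 < ∫ ω, |f ω| ∂μ :=
      lt_of_le_of_ne (integral_nonneg fun ω => abs_nonneg _) (Ne.symm hne)
    have h2 := h ((∫ ω, |f ω| ∂μ) / 2) (by linarith)
    linarith
  have h1 := (integral_eq_zero_iff_of_nonneg (fun ω => abs_nonneg (f ω)) hf.abs).1 h0
  filter_upwards [h1] with ω hω
  simp only [Pi.zero_apply] at hω ⊢
  exact abs_eq_zero.1 hω

private lemma stmt6_mart (hcpl : CompleteFiltration ℱ μ) (hM : IsIncMart ℱ μ M)
    {ξ : Ω → ℝ} (hξint : Integrable ξ μ)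
    (hlim : ∀ ε : ℝ, 0 < ε → ∃ S : ℝ, S < 0 ∧ ∀ s, s ≤ S →
      ∫ ω, |M 0 ω - M s ω - ξ ω| ∂μ ≤ ε) :
    IsMart ℱ μ (fun t ω => M t ω - (M 0 ω - ξ ω)) := by
  set NN : ℝ → Ω → ℝ := fun t ω => M t ω - (M 0 ω - ξ ω) with hNN
  have hXint : ∀ t : ℝ, Integrable (fun ω => M 0 ω - M t ω) μ := stmt6_Xint hM
  have hNNint : ∀ t, Integrable (NN t) μ := by
    intro t
    have h1 : Integrable (fun ω => ξ ω - (M 0 ω - M t ω)) μ := hξint.sub (hXint t)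
    have h2 : (fun ω => ξ ω - (M 0 ω - M t ω)) = NN t := by
      funext ω; simp only [hNN]; ring
    rwa [h2] at h1
  have hcond : ∀ a b : ℝ, a ≤ b → μ[NN b|ℱ a] =ᵐ[μ] NN a := by
    intro a b hab
    set D : Ω → ℝ := fun ω => (μ[NN b|ℱ a]) ω - NN a ω with hD
    have hDint : Integrable D μ := integrable_condExp.sub (hNNint a)
    have hsmall : ∀ δ : ℝ, 0 < δ → ∫ ω, |D ω| ∂μ ≤ δ := by
      intro δ hδ
      obtain ⟨S, hS, hSp⟩ := hlim (δ/2) (by linarith)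
      set u := min S a with hu
      have hua : u ≤ a := min_le_right _ _
      have huS : u ≤ S := min_le_left _ _
      set c : Ω → ℝ := fun ω => ξ ω - (M 0 ω - M u ω) with hc
      have hcint : Integrable c μ := hξint.sub (hXint u)
      have hcbound : ∫ ω, |c ω| ∂μ ≤ δ/2 := by
        have h2 := hSp u huS
        calc ∫ ω, |c ω| ∂μ = ∫ ω, |M 0 ω - M u ω - ξ ω| ∂μ := by
              refine integral_congr_ae (Filter.Eventually.of_forall fun ω => ?_)
              simp only [hc]
              rw [show ξ ω - (M 0 ω - M u ω) = -(M 0 ω - M u ω - ξ ω) from by ring, abs_neg]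
          _ ≤ δ/2 := h2
      have hinc : ∀ t : ℝ, u ≤ t → NN t = fun ω => (M t ω - M u ω) + c ω := by
        intro t hut; funext ω; simp only [hNN, hc]; ring
      have hcondinc := stmt6_Dcond hM (u := u) (a := a) (b := b) hua hab
      have hsplit : μ[NN b|ℱ a]
          =ᵐ[μ] μ[fun ω => M b ω - M u ω|ℱ a] + μ[c|ℱ a] := by
        rw [hinc b (hua.trans hab)]
        exact condExp_add (stmt6_Dint hM (hua.trans hab)) hcint _
      have hDae : D =ᵐ[μ] fun ω => (μ[c|ℱ a]) ω - c ω := by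
        filter_upwards [hsplit, hcondinc] with ω h1 h2
        simp only [hD, Pi.add_apply] at h1 ⊢
        rw [h1, h2, hinc a hua]
        ring
      have i1 : Integrable (μ[c|ℱ a]) μ := integrable_condExp
      have h3 : ∫ ω, |D ω| ∂μ = ∫ ω, |(μ[c|ℱ a]) ω - c ω| ∂μ := by
        refine integral_congr_ae ?_
        filter_upwards [hDae] with ω h
        rw [h]
      have i2 : Integrable (fun ω => (μ[c|ℱ a]) ω - c ω) μ := i1.sub hcint
      have h4 : ∫ ω, |(μ[c|ℱ a]) ω - c ω| ∂μ
          ≤ ∫ ω, (|(μ[c|ℱ a]) ω| + |c ω|) ∂μ :=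
        integral_mono i2.abs (i1.abs.add hcint.abs) fun ω => abs_sub _ _
      have h5 : ∫ ω, (|(μ[c|ℱ a]) ω| + |c ω|) ∂μ
          = (∫ ω, |(μ[c|ℱ a]) ω| ∂μ) + ∫ ω, |c ω| ∂μ :=
        integral_add i1.abs hcint.abs
      have h6 : ∫ ω, |(μ[c|ℱ a]) ω| ∂μ ≤ ∫ ω, |c ω| ∂μ := integral_abs_condExp_le c
      linarith
    have hzero := stmt6_ae_zero hDint hsmall
    filter_upwards [hzero] with ω h
    simp only [hD, Pi.zero_apply] at h
    linarith
  have hadp : ∀ t, StronglyMeasurable[ℱ t] (NN t) := fun t =>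
    stmt6_sm_of_ae_eq hcpl stronglyMeasurable_condExp (hcond t t le_rfl).symm
  exact ⟨⟨hadp, fun a b hab => hcond a b hab⟩, hNNint⟩


private lemma stmt6_submart_abs {𝒢 : Filtration ℕ m} {h : ℕ → Ω → ℝ}
    (hadp : ∀ i, StronglyMeasurable[𝒢 i] (h i))
    (hmg : ∀ i j : ℕ, i ≤ j → μ[h j|𝒢 i] =ᵐ[μ] h i)
    (hint : ∀ i, Integrable (h i) μ) :
    Submartingale (fun i ω => |h i ω|) 𝒢 μ := by
  refine ⟨fun i => ?_, fun i j hij => ?_, fun i => (hint i).abs⟩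
  · have h1 := (hadp i).norm
    simpa only [Real.norm_eq_abs] using h1
  · have habs : Integrable (fun ω => |h j ω|) μ := (hint j).abs
    have hneg : Integrable (fun ω => -h j ω) μ := (hint j).neg
    have h1 : μ[h j|𝒢 i] ≤ᵐ[μ] μ[(fun ω => |h j ω|)|𝒢 i] :=
      condExp_mono (hint j) habs (Filter.Eventually.of_forall fun ω => le_abs_self _)
    have h2 : μ[fun ω => -h j ω|𝒢 i] ≤ᵐ[μ] μ[(fun ω => |h j ω|)|𝒢 i] :=
      condExp_mono hneg habs (Filter.Eventually.of_forall fun ω => neg_le_abs _)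
    have h3 : μ[fun ω => -h j ω|𝒢 i] =ᵐ[μ] fun ω => -(μ[h j|𝒢 i]) ω := condExp_neg (h j) (𝒢 i)
    filter_upwards [hmg i j hij, h1, h2, h3] with ω e1 e2 e3 e4
    rw [abs_le]
    constructor
    · linarith
    · linarith

private lemma stmt6_maximal {NN : ℝ → Ω → ℝ}
    (hadp : ∀ t : ℝ, StronglyMeasurable[ℱ t] (NN t))
    (hint : ∀ t : ℝ, Integrable (NN t) μ)
    (hmg : ∀ a b : ℝ, a ≤ b → μ[NN b|ℱ a] =ᵐ[μ] NN a)
    (r : ℝ) (c : ℝ≥0) (hc : 0 < c) :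
    μ {ω | ∃ q : ℚ, (q:ℝ) ≤ r ∧ (c:ℝ) < |NN q ω|}
      ≤ (c : ℝ≥0∞)⁻¹ * ENNReal.ofReal (∫ ω, |NN r ω| ∂μ) := by
  classical
  have hfin : ∀ s : Finset ℚ, (∀ q ∈ s, (q:ℝ) ≤ r) →
      μ {ω | ∃ q ∈ s, (c:ℝ) < |NN q ω|}
        ≤ (c : ℝ≥0∞)⁻¹ * ENNReal.ofReal (∫ ω, |NN r ω| ∂μ) := by
    intro s hs
    set n := s.card with hn
    set τ : ℕ → ℝ := fun i =>
      if hi : i < n then ((s.orderIsoOfFin hn.symm ⟨i, hi⟩ : ℚ) : ℝ) else r with hτ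
    have hτr : ∀ i, τ i ≤ r := by
      intro i
      by_cases hi : i < n
      · simp only [hτ, dif_pos hi]
        exact hs _ (Finset.coe_mem _)
      · simp only [hτ, dif_neg hi]
        exact le_rfl
    have hτmono : Monotone τ := by
      intro i j hij
      by_cases hj : j < n
      · have hi : i < n := lt_of_le_of_lt hij hj
        simp only [hτ, dif_pos hi, dif_pos hj]
        have h2 := (s.orderIsoOfFin hn.symm).monotone
          (show (⟨i, hi⟩ : Fin n) ≤ ⟨j, hj⟩ from hij)
        exact_mod_cast h2
      · by_cases hi : i < n
        · simp only [hτ, dif_pos hi, dif_neg hj]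
          exact hs _ (Finset.coe_mem _)
        · simp only [hτ, dif_neg hi, dif_neg hj]
          exact le_rfl
    set 𝒢 : Filtration ℕ m :=
      ⟨fun i => ℱ (τ i), fun i j hij => ℱ.mono (hτmono hij), fun i => ℱ.le _⟩ with h𝒢
    have hsub : Submartingale (fun i ω => |NN (τ i) ω|) 𝒢 μ :=
      stmt6_submart_abs (fun i => hadp (τ i))
        (fun i j hij => hmg (τ i) (τ j) (hτmono hij)) (fun i => hint (τ i))
    have hnonneg : 0 ≤ fun i ω => |NN (τ i) ω| := fun i ω => abs_nonneg _
    have hmax := maximal_ineq hsub hnonneg (ε := c) n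
    have hτn : τ n = r := dif_neg (lt_irrefl n)
    set Ssup := {ω | (c : ℝ) ≤ (Finset.range (n+1)).sup' Finset.nonempty_range_add_one
      fun k => |NN (τ k) ω|} with hSsup
    have hincl : {ω | ∃ q ∈ s, (c:ℝ) < |NN q ω|} ⊆ Ssup := by
      intro ω hω
      obtain ⟨q, hqs, hq⟩ := hω
      set i := (s.orderIsoOfFin hn.symm).symm ⟨q, hqs⟩ with hi
      have hτi : τ (i : ℕ) = (q : ℝ) := by
        simp only [hτ, dif_pos i.isLt]
        have h3 : s.orderIsoOfFin hn.symm ⟨(i : ℕ), i.isLt⟩ = ⟨q, hqs⟩ := by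
          rw [Fin.eta]
          exact (s.orderIsoOfFin hn.symm).apply_symm_apply _
        rw [h3]
      have hmem : (i : ℕ) ∈ Finset.range (n+1) :=
        Finset.mem_range.2 (lt_of_lt_of_le i.isLt (Nat.le_succ n))
      have h4 : |NN (τ (i:ℕ)) ω| ≤ (Finset.range (n+1)).sup' Finset.nonempty_range_add_one
          (fun k => |NN (τ k) ω|) := Finset.le_sup' (fun k => |NN (τ k) ω|) hmem
      rw [hτi] at h4
      exact le_trans (le_of_lt hq) h4
    have hRHS : ENNReal.ofReal (∫ ω in Ssup, |NN (τ n) ω| ∂μ)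
        ≤ ENNReal.ofReal (∫ ω, |NN r ω| ∂μ) := by
      rw [hτn]
      exact ENNReal.ofReal_le_ofReal (setIntegral_le_integral (hint r).abs
        (Filter.Eventually.of_forall fun ω => abs_nonneg _))
    have h5 : (c : ℝ≥0∞) * μ Ssup ≤ ENNReal.ofReal (∫ ω, |NN r ω| ∂μ) := by
      refine le_trans ?_ hRHS
      simpa [ENNReal.smul_def] using hmax
    calc μ {ω | ∃ q ∈ s, (c:ℝ) < |NN q ω|} ≤ μ Ssup := measure_mono hincl
      _ = (c : ℝ≥0∞)⁻¹ * ((c:ℝ≥0∞) * μ Ssup) := by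
          rw [← mul_assoc, ENNReal.inv_mul_cancel (by exact_mod_cast hc.ne') ENNReal.coe_ne_top,
            one_mul]
      _ ≤ (c : ℝ≥0∞)⁻¹ * ENNReal.ofReal (∫ ω, |NN r ω| ∂μ) := mul_le_mul_right h5 _
  set B : Finset ℚ → Set Ω := fun t =>
    {ω | ∃ q ∈ t.filter (fun q : ℚ => (q:ℝ) ≤ r), (c:ℝ) < |NN q ω|} with hB
  have hBle : ∀ t, μ (B t) ≤ (c : ℝ≥0∞)⁻¹ * ENNReal.ofReal (∫ ω, |NN r ω| ∂μ) := by
    intro t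
    exact hfin _ fun q hq => (Finset.mem_filter.1 hq).2
  have hdir : Directed (· ⊆ ·) B := by
    intro t1 t2
    refine ⟨t1 ∪ t2, ?_, ?_⟩
    · rintro ω ⟨q, hq, h⟩
      exact ⟨q, Finset.filter_subset_filter _ Finset.subset_union_left hq, h⟩
    · rintro ω ⟨q, hq, h⟩
      exact ⟨q, Finset.filter_subset_filter _ Finset.subset_union_right hq, h⟩
  have hunion : {ω | ∃ q : ℚ, (q:ℝ) ≤ r ∧ (c:ℝ) < |NN q ω|} = ⋃ t, B t := by
    ext ω
    constructor
    · rintro ⟨q, hqr, hq⟩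
      exact Set.mem_iUnion.2 ⟨{q}, ⟨q, Finset.mem_filter.2 ⟨Finset.mem_singleton_self q, hqr⟩, hq⟩⟩
    · intro h
      obtain ⟨t, hk⟩ := Set.mem_iUnion.1 h
      obtain ⟨q, hqmem, hq⟩ := hk
      exact ⟨q, (Finset.mem_filter.1 hqmem).2, hq⟩
  rw [hunion, Directed.measure_iUnion hdir]
  exact iSup_le hBle

private lemma stmt6_dirB (hcpl : CompleteFiltration ℱ μ) (hcad : ∀ ω, Cadlag fun t => M t ω)
    (hM : IsIncMart ℱ μ M)
    (hUI : UniformIntegrable (fun s : Set.Iio (0:ℝ) => fun ω => M 0 ω - M (s : ℝ) ω) 1 μ) :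
    ∃ Z : Ω → ℝ, (∀ᵐ ω ∂μ, Tendsto (fun s => M s ω) atBot (nhds (Z ω))) ∧
      IsMart ℱ μ fun t ω => M t ω - Z ω := by
  classical
  obtain ⟨ξ, hξint, hlim⟩ := stmt6_limit hM hUI
  have hmart := stmt6_mart hcpl hM hξint hlim
  refine ⟨fun ω => M 0 ω - ξ ω, ?_, hmart⟩
  set NN : ℝ → Ω → ℝ := fun t ω => M t ω - (M 0 ω - ξ ω) with hNNdef
  obtain ⟨⟨hNadp, hNmg⟩, hNint⟩ := id hmart
  have hL1 : ∀ δ : ℝ, 0 < δ → ∃ S : ℝ, S < 0 ∧ ∀ s, s ≤ S → ∫ ω, |NN s ω| ∂μ ≤ δ := by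
    intro δ hδ
    obtain ⟨S, hS, hSp⟩ := hlim δ hδ
    refine ⟨S, hS, fun s hs => ?_⟩
    calc ∫ ω, |NN s ω| ∂μ = ∫ ω, |M 0 ω - M s ω - ξ ω| ∂μ := by
          refine integral_congr_ae (Filter.Eventually.of_forall fun ω => ?_)
          show |NN s ω| = |M 0 ω - M s ω - ξ ω|
          rw [show NN s ω = -(M 0 ω - M s ω - ξ ω) from by simp only [hNNdef]; ring, abs_neg]
      _ ≤ δ := hSp s hs
  set cc : ℕ → ℝ≥0 := fun j => ((j:ℝ≥0)+1)⁻¹ with hcc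
  have hccpos : ∀ j, 0 < cc j := fun j => inv_pos.2 (lt_of_lt_of_le zero_lt_one le_add_self)
  set Ej : ℕ → Set Ω := fun j =>
    ⋂ n : ℕ, {ω | ∃ q : ℚ, (q:ℝ) ≤ -(n:ℝ) ∧ ((cc j : ℝ)) < |NN q ω|} with hEj
  have hEj0 : ∀ j, μ (Ej j) = 0 := by
    intro j
    have hall : ∀ η : ℝ, 0 < η → μ (Ej j) ≤ ENNReal.ofReal η := by
      intro η hη
      have hccR : (0:ℝ) < (cc j : ℝ) := by exact_mod_cast hccpos j
      obtain ⟨S, hS, hSp⟩ := hL1 (η * (cc j : ℝ)) (mul_pos hη hccR)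
      obtain ⟨n, hn⟩ := exists_nat_ge (-S)
      have hnS : -(n:ℝ) ≤ S := by linarith
      have h1 : μ (Ej j) ≤ (cc j : ℝ≥0∞)⁻¹ * ENNReal.ofReal (∫ ω, |NN (-(n:ℝ)) ω| ∂μ) := by
        refine le_trans (measure_mono ?_)
          (stmt6_maximal hNadp hNint hNmg (-(n:ℝ)) (cc j) (hccpos j))
        exact Set.iInter_subset _ n
      have h2 : ∫ ω, |NN (-(n:ℝ)) ω| ∂μ ≤ η * (cc j : ℝ) := hSp _ hnS
      calc μ (Ej j) ≤ (cc j : ℝ≥0∞)⁻¹ * ENNReal.ofReal (η * (cc j : ℝ)) :=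
            le_trans h1 (mul_le_mul_right (ENNReal.ofReal_le_ofReal h2) _)
        _ = ENNReal.ofReal η := by
            rw [ENNReal.ofReal_mul hη.le, ENNReal.ofReal_coe_nnreal,
              mul_comm (ENNReal.ofReal η) ((cc j : ℝ≥0∞)), ← mul_assoc,
              ENNReal.inv_mul_cancel (by exact_mod_cast (hccpos j).ne') ENNReal.coe_ne_top,
              one_mul]
    by_contra hne
    have hfin : μ (Ej j) ≠ ⊤ := measure_ne_top μ _
    have hpos : 0 < (μ (Ej j)).toReal := ENNReal.toReal_pos hne hfin
    have h3 := hall ((μ (Ej j)).toReal/2) (by linarith)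
    have h4 : ENNReal.ofReal ((μ (Ej j)).toReal/2) < μ (Ej j) := by
      rw [ENNReal.ofReal_lt_iff_lt_toReal (by linarith) hfin]
      linarith
    exact absurd (lt_of_le_of_lt h3 h4) (lt_irrefl _)
  have hbad : μ (⋃ j, Ej j) = 0 := measure_iUnion_null hEj0
  have hgood := measure_eq_zero_iff_ae_notMem.1 hbad
  filter_upwards [hgood] with ω hω
  have hgood2 : ∀ j : ℕ, ∃ n : ℕ, ∀ q : ℚ, (q:ℝ) ≤ -(n:ℝ) → |NN q ω| ≤ (cc j : ℝ) := by
    intro j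
    have h1 : ω ∉ Ej j := fun h => hω (Set.mem_iUnion.2 ⟨j, h⟩)
    simp only [hEj, Set.mem_iInter, Set.mem_setOf_eq] at h1
    push_neg at h1
    exact h1
  refine Metric.tendsto_nhds.2 fun ε hε => ?_
  obtain ⟨j, hj⟩ := exists_nat_one_div_lt hε
  have hcj : (cc j : ℝ) < ε := by
    have h8 : (cc j : ℝ) = 1/((j:ℝ)+1) := by
      simp only [hcc]
      push_cast
      rw [one_div]
    rw [h8]
    exact hj
  obtain ⟨n, hn⟩ := hgood2 j
  rw [Filter.eventually_atBot]
  refine ⟨-(n:ℝ) - 1, fun s hs => ?_⟩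
  have hclaim : |NN s ω| ≤ (cc j : ℝ) := by
    have hrc := (hcad ω).1 s
    have hb : ∀ η : ℝ, 0 < η → |NN s ω| ≤ (cc j : ℝ) + η := by
      intro η hη
      obtain ⟨δ, hδ, hδp⟩ := Metric.continuousWithinAt_iff.1 hrc η hη
      have hsn : s < min (s + δ) (-(n:ℝ)) := lt_min (by linarith) (by linarith)
      obtain ⟨q, hq1, hq2⟩ := exists_rat_btwn hsn
      have hqn : (q:ℝ) ≤ -(n:ℝ) := le_of_lt (lt_of_lt_of_le hq2 (min_le_right _ _))
      have hqd : dist ((q:ℝ)) s < δ := by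
        rw [Real.dist_eq, abs_of_pos (by linarith : (0:ℝ) < (q:ℝ) - s)]
        have h9 := lt_of_lt_of_le hq2 (min_le_left _ _)
        linarith
      have hqball := hδp (Set.mem_Ici.2 (le_of_lt hq1)) hqd
      rw [Real.dist_eq] at hqball
      have hq3 := hn q hqn
      have h7 : NN s ω = (M s ω - M (q:ℝ) ω) + NN (q:ℝ) ω := by
        simp only [hNNdef]; ring
      calc |NN s ω| ≤ |M s ω - M (q:ℝ) ω| + |NN (q:ℝ) ω| := by
            rw [h7]; exact abs_add_le _ _
        _ ≤ η + (cc j : ℝ) := add_le_add (by rw [abs_sub_comm]; exact hqball.le) hq3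
        _ = (cc j : ℝ) + η := by ring
    by_contra hlt
    push_neg at hlt
    have h10 := hb ((|NN s ω| - (cc j : ℝ))/2) (by linarith)
    linarith
  have hdist : dist (M s ω) (M 0 ω - ξ ω) = |NN s ω| := by
    rw [Real.dist_eq]
  rw [hdist]
  exact lt_of_le_of_lt hclaim hcj

end Stmt6Aux


/-- for a càdlàg process `M`, the following are equivalent:
(a) `M_{-∞}` exists a.s. and `(M_t - M_{-∞})_t` is a martingale;
(b) `M` is an increment martingale and `(M_0 - M_s)_{s<0}` is uniformly integrable. -/
theorem stmt6 {Ω : Type*} {m : MeasurableSpace Ω} {μ : Measure Ω} [IsProbabilityMeasure μ]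
    (ℱ : Filtration ℝ m) (hrc : RightContinuousFiltration ℱ) (hcpl : CompleteFiltration ℱ μ)
    (M : ℝ → Ω → ℝ) (hcad : ∀ ω, Cadlag fun t => M t ω) :
    (∃ Z : Ω → ℝ, (∀ᵐ ω ∂μ, Tendsto (fun s => M s ω) atBot (nhds (Z ω))) ∧
        IsMart ℱ μ fun t ω => M t ω - Z ω) ↔
      (IsIncMart ℱ μ M ∧
        UniformIntegrable (fun s : Set.Iio (0 : ℝ) => fun ω => M 0 ω - M (s : ℝ) ω) 1 μ) := by
  constructor
  · rintro ⟨Z, hZ, hmart⟩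
    exact stmt6_dirA hcad hmart
  · rintro ⟨hM, hUI⟩
    exact stmt6_dirB hcpl hcad hM hUI
end

section
/- For a càdlàg process M = (M_t)_{t∈ℝ}, the following are equivalent: (c) M_{−∞} := lim_{s→−∞} M_s exists a.s. and (M_t − M_{−∞})_t is a square integrable martingale; (d) M is an increment square integrable martingale and sup_{s≤0} E[(M_0 − M_s)²] < ∞. -/
open MeasureTheory Filter Set

open scoped ENNReal NNReal Topology

set_option linter.unusedSectionVars false

namespace Stmt7Aux

variable {Ω : Type*} {m : MeasurableSpace Ω} {μ : Measure Ω} [IsProbabilityMeasure μ]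

lemma integrable_mul_of_memL2 {f g : Ω → ℝ} (hf : MemLp f 2 μ) (hg : MemLp g 2 μ) :
    Integrable (fun ω => f ω * g ω) μ := by
  have h1 : Integrable (fun ω => (f ω ^ 2 + g ω ^ 2) / 2) μ :=
    (hf.integrable_sq.add hg.integrable_sq).div_const 2
  refine h1.mono' (hf.aestronglyMeasurable.mul hg.aestronglyMeasurable) ?_
  filter_upwards with ω
  have h2 : 2 * f ω * g ω ≤ f ω ^ 2 + g ω ^ 2 := two_mul_le_add_sq _ _
  have h3 : 2 * (-(f ω)) * g ω ≤ (-(f ω)) ^ 2 + g ω ^ 2 := two_mul_le_add_sq _ _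
  rw [Real.norm_eq_abs, abs_le]
  constructor <;> nlinarith

lemma cross_zero {F : MeasurableSpace Ω} (hF : F ≤ m) {X Y : Ω → ℝ}
    (hX : MemLp X 2 μ) (hY : MemLp Y 2 μ) (hXm : StronglyMeasurable[F] X)
    (h0 : μ[Y|F] =ᵐ[μ] 0) : ∫ ω, X ω * Y ω ∂μ = 0 := by
  haveI : SigmaFinite (μ.trim hF) := by infer_instance
  have hint : Integrable (X * Y) μ := integrable_mul_of_memL2 hX hY
  have h1 : μ[X * Y|F] =ᵐ[μ] X * μ[Y|F] :=
    condExp_mul_of_stronglyMeasurable_left hXm hint (hY.integrable one_le_two)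
  have h2 : μ[X * Y|F] =ᵐ[μ] (0 : Ω → ℝ) := by
    refine h1.trans ?_
    filter_upwards [h0] with ω hω
    simp [hω]
  calc ∫ ω, X ω * Y ω ∂μ = ∫ ω, (X * Y) ω ∂μ := rfl
    _ = ∫ ω, (μ[X * Y|F]) ω ∂μ := (integral_condExp hF).symm
    _ = ∫ ω, (0 : Ω → ℝ) ω ∂μ := integral_congr_ae h2
    _ = 0 := by simp

lemma pyth {F : MeasurableSpace Ω} (hF : F ≤ m) {X Y : Ω → ℝ}
    (hX : MemLp X 2 μ) (hY : MemLp Y 2 μ) (hXm : StronglyMeasurable[F] X)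
    (h0 : μ[Y|F] =ᵐ[μ] 0) :
    ∫ ω, (X ω + Y ω) ^ 2 ∂μ = ∫ ω, X ω ^ 2 ∂μ + ∫ ω, Y ω ^ 2 ∂μ := by
  have hc := cross_zero hF hX hY hXm h0
  have h1 : ∀ ω, (X ω + Y ω) ^ 2 = X ω ^ 2 + (2 * (X ω * Y ω) + Y ω ^ 2) := fun ω => by ring
  have hXY : Integrable (fun ω => X ω * Y ω) μ := integrable_mul_of_memL2 hX hY
  calc ∫ ω, (X ω + Y ω) ^ 2 ∂μ
      = ∫ ω, (X ω ^ 2 + (2 * (X ω * Y ω) + Y ω ^ 2)) ∂μ := by simp_rw [h1]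
    _ = ∫ ω, X ω ^ 2 ∂μ + (∫ ω, 2 * (X ω * Y ω) ∂μ + ∫ ω, Y ω ^ 2 ∂μ) := by
        have hg : Integrable (fun ω => 2 * (X ω * Y ω) + Y ω ^ 2) μ :=
          (hXY.const_mul 2).add hY.integrable_sq
        rw [integral_add hX.integrable_sq hg,
          integral_add (hXY.const_mul 2) hY.integrable_sq]
    _ = ∫ ω, X ω ^ 2 ∂μ + ∫ ω, Y ω ^ 2 ∂μ := by
        rw [integral_const_mul, hc]; ring

lemma patch_stronglyMeasurable {F : MeasurableSpace Ω}
    (hμ : ∀ s : Set Ω, μ s = 0 → MeasurableSet[F] s) {f g : Ω → ℝ}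
    (hg : Measurable[F] g) (hfg : f =ᵐ[μ] g) : StronglyMeasurable[F] f := by
  have hN : μ {ω | ¬ f ω = g ω} = 0 := by
    rw [← ae_iff]; exact hfg
  refine Measurable.stronglyMeasurable ?_
  intro B hB
  have hset : f ⁻¹' B = (g ⁻¹' B ∩ {ω | ¬ f ω = g ω}ᶜ) ∪ (f ⁻¹' B ∩ {ω | ¬ f ω = g ω}) := by
    ext ω
    by_cases h : f ω = g ω <;> simp [h] <;> tauto
  rw [hset]
  exact ((hg hB).inter (hμ _ hN).compl).union
    (hμ _ (measure_mono_null inter_subset_right hN))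

lemma lintegral_ofReal_sq_eq {f : Ω → ℝ} (hf : MemLp f 2 μ) :
    ∫⁻ ω, ENNReal.ofReal (f ω ^ 2) ∂μ = ENNReal.ofReal (∫ ω, f ω ^ 2 ∂μ) := by
  rw [ofReal_integral_eq_lintegral_ofReal hf.integrable_sq
    (Eventually.of_forall fun ω => sq_nonneg _)]

lemma eLpNorm_two_eq {f : Ω → ℝ} :
    eLpNorm f 2 μ = (∫⁻ ω, ENNReal.ofReal (f ω ^ 2) ∂μ) ^ (1/2 : ℝ) := by
  rw [eLpNorm_eq_lintegral_rpow_enorm_toReal two_ne_zero ENNReal.ofNat_ne_top]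
  have h2 : ((2:ℝ≥0∞)).toReal = (2:ℝ) := by norm_num
  rw [h2]
  congr 1
  refine lintegral_congr fun ω => ?_
  rw [Real.enorm_eq_ofReal_abs, ENNReal.ofReal_rpow_of_nonneg (abs_nonneg _) (by norm_num),
    Real.rpow_two, sq_abs]


variable {ℱ : Filtration ℝ m} {M : ℝ → Ω → ℝ}

lemma incr_of_le {s t : ℝ} (h : s ≤ t) (ω : Ω) : incr M s t ω = M t ω - M s ω := by
  simp [incr, min_eq_right h]

lemma incr_self (s : ℝ) (ω : Ω) : incr M s s ω = 0 := by simp [incr]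

lemma incr_split {s s' : ℝ} (t : ℝ) (h : s ≤ s') (ω : Ω) :
    incr M s t ω = incr M s' t ω + incr M s (min t s') ω := by
  simp only [incr, min_assoc]
  rw [min_eq_right h]; ring

section Mart

variable (hmart : ∀ s : ℝ, Martingale (incr M s) ℱ μ)
    (hL2 : ∀ s t : ℝ, MemLp (incr M s t) 2 μ)

include hmart hL2

lemma condexp_incr_zero {s t : ℝ} (h : s ≤ t) : μ[incr M s t|ℱ s] =ᵐ[μ] 0 := by
  refine ((hmart s).condExp_ae_eq h).trans ?_
  have : incr M s s = fun _ => (0:ℝ) := funext fun ω => incr_self s ω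
  rw [this]; rfl

lemma sq_integral_split {s s' t : ℝ} (h1 : s ≤ s') (h2 : s' ≤ t) :
    ∫ ω, (incr M s t ω)^2 ∂μ
      = ∫ ω, (incr M s s' ω)^2 ∂μ + ∫ ω, (incr M s' t ω)^2 ∂μ := by
  have hsplit : ∀ ω, incr M s t ω = incr M s s' ω + incr M s' t ω := fun ω => by
    rw [incr_split t h1 ω, min_eq_right h2]; ring
  simp_rw [hsplit]
  exact pyth (ℱ.le s') (hL2 s s') (hL2 s' t) ((hmart s).stronglyAdapted s')
    (condexp_incr_zero hmart hL2 h2)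

lemma doob {s₀ b δ : ℝ} (hδ : 0 < δ) (F : Finset ℝ) (hFb : ∀ q ∈ F, q ≤ b) :
    δ^2 * (μ {ω | ∃ q ∈ F, δ ≤ |incr M s₀ q ω|}).toReal
      ≤ ∫ ω, (incr M s₀ b ω)^2 ∂μ := by
  classical
  set N := incr M s₀ with hN
  have hint : ∀ t, Integrable (N t) μ := fun t => (hL2 s₀ t).integrable one_le_two
  have hNmeas : ∀ q : ℝ, StronglyMeasurable[ℱ q] (N q) := fun q => (hmart s₀).stronglyAdapted q
  set A : ℝ → Set Ω := fun q =>
    {ω | δ ≤ |N q ω|} ∩ ⋂ r ∈ F.filter (· < q), {ω | |N r ω| < δ} with hA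
  have hAmeasq : ∀ q, MeasurableSet[ℱ q] (A q) := by
    intro q
    refine MeasurableSet.inter ?_ ?_
    · have hm1 : Measurable[ℱ q] fun ω => |N q ω| := continuous_abs.measurable.comp (hNmeas q).measurable
      exact hm1 measurableSet_Ici
    · refine MeasurableSet.biInter ((F.filter (· < q)).countable_toSet) fun r hr => ?_
      have hrq : r < q := (Finset.mem_filter.mp hr).2
      have hm2 : Measurable[ℱ r] fun ω => |N r ω| := continuous_abs.measurable.comp (hNmeas r).measurable
      exact ℱ.mono hrq.le _ (hm2 measurableSet_Iio)
  have hAmeas : ∀ q, MeasurableSet (A q) := fun q => ℱ.le q _ (hAmeasq q)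
  have hdisj' : ∀ q ∈ F, ∀ q' ∈ F, q < q' → Disjoint (A q) (A q') := by
    intro q hq q' _ hlt
    rw [Set.disjoint_left]
    intro ω hω hω'
    have h1 : δ ≤ |N q ω| := hω.1
    have h2 : |N q ω| < δ := by
      have := hω'.2
      rw [Set.mem_iInter₂] at this
      exact this q (Finset.mem_filter.mpr ⟨hq, hlt⟩)
    exact absurd h1 (not_le.mpr h2)
  have hdisj : (↑F : Set ℝ).PairwiseDisjoint A := by
    intro q hq q' hq' hne
    rcases lt_or_gt_of_ne hne with h | h
    · exact hdisj' q hq q' hq' h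
    · exact (hdisj' q' hq' q hq h).symm
  have hunion : {ω | ∃ q ∈ F, δ ≤ |N q ω|} = ⋃ q ∈ F, A q := by
    ext ω
    simp only [Set.mem_setOf_eq, Set.mem_iUnion]
    constructor
    · rintro ⟨q, hq, hδq⟩
      have hS : (F.filter (fun r => δ ≤ |N r ω|)).Nonempty :=
        ⟨q, Finset.mem_filter.mpr ⟨hq, hδq⟩⟩
      obtain ⟨q₀, hq₀, hmin⟩ := Finset.exists_min_image _ id hS
      rw [Finset.mem_filter] at hq₀
      refine ⟨q₀, hq₀.1, hq₀.2, ?_⟩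
      rw [Set.mem_iInter₂]
      intro r hr
      rw [Finset.mem_filter] at hr
      by_contra hcon
      simp only [Set.mem_setOf_eq, not_lt] at hcon
      have : q₀ ≤ r := hmin r (Finset.mem_filter.mpr ⟨hr.1, hcon⟩)
      exact absurd hr.2 (not_lt.mpr this)
    · rintro ⟨q, hq, hmem⟩
      exact ⟨q, hq, hmem.1⟩
  have hkey : ∀ q ∈ F, δ^2 * (μ (A q)).toReal ≤ ∫ ω in A q, (N b ω)^2 ∂μ := by
    intro q hq
    have hqb : q ≤ b := hFb q hq
    have step1 : δ^2 * (μ (A q)).toReal ≤ ∫ ω in A q, (N q ω)^2 ∂μ := by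
      have hconst : ∫ _ω in A q, (δ^2 : ℝ) ∂μ = δ^2 * (μ (A q)).toReal := by
        rw [setIntegral_const, smul_eq_mul, measureReal_def]; ring
      rw [← hconst]
      refine setIntegral_mono_on (integrableOn_const (measure_ne_top _ _))
        ((hL2 s₀ q).integrable_sq.integrableOn) (hAmeas q) ?_
      intro ω hω
      have h1 : δ ≤ |N q ω| := hω.1
      calc δ^2 ≤ |N q ω|^2 := by
            exact pow_le_pow_left₀ hδ.le h1 2
        _ = (N q ω)^2 := sq_abs _
    have step2 : ∫ ω in A q, (N q ω)^2 ∂μ ≤ ∫ ω in A q, (N b ω)^2 ∂μ := by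
      have hXm : StronglyMeasurable[ℱ q] ((A q).indicator (N q)) :=
        (hNmeas q).indicator (hAmeasq q)
      have hX2 : MemLp ((A q).indicator (N q)) 2 μ := (hL2 s₀ q).indicator (hAmeas q)
      have hY2 : MemLp (fun ω => N b ω - N q ω) 2 μ := (hL2 s₀ b).sub (hL2 s₀ q)
      have h0 : μ[fun ω => N b ω - N q ω|ℱ q] =ᵐ[μ] 0 := by
        have h1 : μ[N b - N q|ℱ q] =ᵐ[μ] μ[N b|ℱ q] - μ[N q|ℱ q] :=
          condExp_sub (hint b) (hint q) _
        have h2 : μ[N b|ℱ q] =ᵐ[μ] N q := (hmart s₀).condExp_ae_eq hqb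
        have h3 : μ[N q|ℱ q] = N q :=
          condExp_of_stronglyMeasurable (ℱ.le q) (hNmeas q) (hint q)
        have : (fun ω => N b ω - N q ω) = N b - N q := rfl
        rw [this]
        refine h1.trans ?_
        filter_upwards [h2] with ω e2
        simp only [Pi.sub_apply, h3, e2, Pi.zero_apply, sub_self]
      have hcross : ∫ ω, ((A q).indicator (N q)) ω * (N b ω - N q ω) ∂μ = 0 :=
        cross_zero (ℱ.le q) hX2 hY2 hXm h0
      have hcross' : ∫ ω in A q, N q ω * (N b ω - N q ω) ∂μ = 0 := by
        rw [← integral_indicator (hAmeas q)]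
        rw [← hcross]
        congr 1
        funext ω
        rw [Set.indicator_mul_left]
      have hexp : ∀ ω, (N b ω)^2
          = (N q ω)^2 + ((N b ω - N q ω)^2 + 2 * (N q ω * (N b ω - N q ω))) :=
        fun ω => by ring
      have hi1 : IntegrableOn (fun ω => (N q ω)^2) (A q) μ :=
        (hL2 s₀ q).integrable_sq.integrableOn
      have hi2 : IntegrableOn (fun ω => (N b ω - N q ω)^2) (A q) μ :=
        hY2.integrable_sq.integrableOn
      have hi3 : IntegrableOn (fun ω => 2 * (N q ω * (N b ω - N q ω))) (A q) μ :=
        ((integrable_mul_of_memL2 (hL2 s₀ q) hY2).const_mul 2).integrableOn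
      calc ∫ ω in A q, (N q ω)^2 ∂μ
          ≤ ∫ ω in A q, (N q ω)^2 ∂μ + ∫ ω in A q, (N b ω - N q ω)^2 ∂μ := by
            have : 0 ≤ ∫ ω in A q, (N b ω - N q ω)^2 ∂μ :=
              setIntegral_nonneg (hAmeas q) fun ω _ => sq_nonneg _
            linarith
        _ = ∫ ω in A q, ((N q ω)^2 + ((N b ω - N q ω)^2
              + 2 * (N q ω * (N b ω - N q ω)))) ∂μ := by
            have hz : ∫ ω in A q, 2 * (N q ω * (N b ω - N q ω)) ∂μ = 0 := by
              rw [integral_const_mul, hcross']; ring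
            have hi23 : IntegrableOn (fun ω => (N b ω - N q ω)^2
                + 2 * (N q ω * (N b ω - N q ω))) (A q) μ := hi2.add hi3
            rw [integral_add hi1 hi23, integral_add hi2 hi3, hz]
            ring
        _ = ∫ ω in A q, (N b ω)^2 ∂μ := by
            congr 1; funext ω; rw [← hexp ω]
    exact step1.trans step2
  calc δ^2 * (μ {ω | ∃ q ∈ F, δ ≤ |N q ω|}).toReal
      = ∑ q ∈ F, δ^2 * (μ (A q)).toReal := by
        rw [hunion, measure_biUnion_finset hdisj (fun q _ => hAmeas q),
          ENNReal.toReal_sum (fun q _ => measure_ne_top μ _), Finset.mul_sum]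
    _ ≤ ∑ q ∈ F, ∫ ω in A q, (N b ω)^2 ∂μ := Finset.sum_le_sum hkey
    _ = ∫ ω in ⋃ q ∈ F, A q, (N b ω)^2 ∂μ :=
        (integral_biUnion_finset F (fun q _ => hAmeas q)
          (fun q hq q' hq' hne => hdisj hq hq' hne)
          (fun q _ => (hL2 s₀ b).integrable_sq.integrableOn)).symm
    _ ≤ ∫ ω, (N b ω)^2 ∂μ :=
        setIntegral_le_integral (hL2 s₀ b).integrable_sq
          (Eventually.of_forall fun ω => sq_nonneg _)

end Mart


lemma exists_rat_near {f : ℝ → ℝ} {s : ℝ} (hf : ContinuousWithinAt f (Ici s) s)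
    {δ c : ℝ} (hδ : 0 < δ) (hc : s < c) :
    ∃ q : ℚ, s < (q:ℝ) ∧ (q:ℝ) < c ∧ |f q - f s| < δ := by
  have hU : {u | |f u - f s| < δ} ∈ nhdsWithin s (Ici s) := by
    have h1 := hf (Metric.ball_mem_nhds (f s) hδ)
    refine Filter.mem_of_superset h1 ?_
    intro u hu
    simpa [Real.dist_eq] using hu
  obtain ⟨U, hUopen, hsU, hsub⟩ := mem_nhdsWithin.mp hU
  obtain ⟨r, hr, hball⟩ := Metric.isOpen_iff.mp hUopen s hsU
  obtain ⟨q, hq1, hq2⟩ := exists_rat_btwn (lt_min hc (by linarith : s < s + r))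
  refine ⟨q, hq1, lt_of_lt_of_le hq2 (min_le_left _ _), ?_⟩
  have hq3 : (q:ℝ) < s + r := lt_of_lt_of_le hq2 (min_le_right _ _)
  have hqU : (q:ℝ) ∈ U := hball (by
    rw [Metric.mem_ball, Real.dist_eq, abs_lt]
    constructor <;> linarith)
  exact hsub ⟨hqU, le_of_lt hq1⟩

section Mart2

variable (hmart : ∀ s : ℝ, Martingale (incr M s) ℱ μ)
    (hL2 : ∀ s t : ℝ, MemLp (incr M s t) 2 μ)

include hmart hL2

lemma phi_mono {s s' : ℝ} (h1 : s ≤ s') :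
    ∫ ω, (incr M s' 0 ω)^2 ∂μ ≤ ∫ ω, (incr M s 0 ω)^2 ∂μ := by
  rcases le_or_gt s' 0 with h2 | h2
  · rw [sq_integral_split hmart hL2 h1 h2]
    have : 0 ≤ ∫ ω, (incr M s s' ω)^2 ∂μ := integral_nonneg fun ω => sq_nonneg _
    linarith
  · have e1 : ∀ ω, incr M s' 0 ω = 0 := by
      intro ω; simp [incr, min_eq_left h2.le]
    simp only [e1]
    have h0 : 0 ≤ ∫ ω, (incr M s 0 ω)^2 ∂μ := integral_nonneg fun ω => sq_nonneg _
    simp [h0]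

lemma osc_bound {a ε K : ℝ} (hε : 0 < ε)
    (hK : ∀ s₀ : ℝ, s₀ ≤ a → ∫ ω, (incr M s₀ a ω)^2 ∂μ ≤ K) :
    μ {ω | ∃ q q' : ℚ, (q:ℝ) ≤ a ∧ (q':ℝ) ≤ a ∧ ε < |M q ω - M q' ω|}
      ≤ ENNReal.ofReal (K / (ε/2)^2) := by
  classical
  have hK0 : 0 ≤ K := by
    have := hK a le_rfl
    have h0 : 0 ≤ ∫ ω, (incr M a a ω)^2 ∂μ := integral_nonneg fun ω => sq_nonneg _
    linarith
  set e : ℕ → ℚ := fun n => (Denumerable.eqv ℚ).symm n with he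
  set G : ℕ → Finset ℝ := fun n =>
    insert a (((Finset.range n).image (fun k => ((e k : ℚ) : ℝ))).filter (· ≤ a)) with hG
  have hGa : ∀ n, a ∈ G n := fun n => Finset.mem_insert_self _ _
  have hGle : ∀ n, ∀ q ∈ G n, q ≤ a := by
    intro n q hq
    rcases Finset.mem_insert.mp hq with h | h
    · exact h.le
    · exact (Finset.mem_filter.mp h).2
  set s₀ : ℕ → ℝ := fun n => (G n).min' ⟨a, hGa n⟩ with hs₀
  have hs₀le : ∀ n, ∀ q ∈ G n, s₀ n ≤ q := fun n q hq => Finset.min'_le _ _ hq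
  set D : ℕ → Set Ω := fun n =>
    {ω | ∃ q ∈ G n, ∃ q' ∈ G n, ε < |M q ω - M q' ω|} with hD
  have hDsub : ∀ n, D n ⊆ {ω | ∃ q ∈ G n, ε/2 ≤ |incr M (s₀ n) q ω|} := by
    rintro n ω ⟨q, hq, q', hq', hgt⟩
    have hNq : incr M (s₀ n) q ω = M q ω - M (s₀ n) ω := incr_of_le (hs₀le n q hq) ω
    have hNq' : incr M (s₀ n) q' ω = M q' ω - M (s₀ n) ω := incr_of_le (hs₀le n q' hq') ω
    by_contra hcon
    simp only [Set.mem_setOf_eq, not_exists, not_le, exists_prop, not_and] at hcon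
    have c1 := hcon q hq
    have c2 := hcon q' hq'
    have : |M q ω - M q' ω| ≤ |incr M (s₀ n) q ω| + |incr M (s₀ n) q' ω| := by
      rw [hNq, hNq']
      have : M q ω - M q' ω = (M q ω - M (s₀ n) ω) - (M q' ω - M (s₀ n) ω) := by ring
      rw [this]
      exact abs_sub _ _
    linarith
  have hDbound : ∀ n, μ (D n) ≤ ENNReal.ofReal (K / (ε/2)^2) := by
    intro n
    have hdoob := doob hmart hL2 (s₀ := s₀ n) (by positivity : (0:ℝ) < ε/2) (G n) (hGle n)
    have hsa : s₀ n ≤ a := hs₀le n a (hGa n)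
    have h2 : (ε/2)^2 * (μ {ω | ∃ q ∈ G n, ε/2 ≤ |incr M (s₀ n) q ω|}).toReal ≤ K :=
      le_trans hdoob (hK (s₀ n) hsa)
    have h3 : μ (D n) ≤ μ {ω | ∃ q ∈ G n, ε/2 ≤ |incr M (s₀ n) q ω|} :=
      measure_mono (hDsub n)
    refine le_trans h3 ?_
    rw [ENNReal.le_ofReal_iff_toReal_le (measure_ne_top μ _) (by positivity)]
    rw [le_div_iff₀ (by positivity : (0:ℝ) < (ε/2)^2)]
    linarith [h2]
  have hDmono : Monotone D := by
    intro n n' hnn' ω hω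
    obtain ⟨q, hq, q', hq', hgt⟩ := hω
    have hGsub : G n ⊆ G n' := by
      refine Finset.insert_subset_insert _ (Finset.filter_subset_filter _ ?_)
      exact Finset.image_subset_image (Finset.range_subset_range.mpr hnn')
    exact ⟨q, hGsub hq, q', hGsub hq', hgt⟩
  have hcover : {ω | ∃ q q' : ℚ, (q:ℝ) ≤ a ∧ (q':ℝ) ≤ a ∧ ε < |M q ω - M q' ω|}
      ⊆ ⋃ n, D n := by
    intro ω hω
    obtain ⟨q, q', hqa, hq'a, hgt⟩ := hω
    simp only [Set.mem_iUnion]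
    set n := max ((Denumerable.eqv ℚ) q) ((Denumerable.eqv ℚ) q') + 1 with hn
    refine ⟨n, ?_⟩
    have hqmem : ((q:ℚ):ℝ) ∈ G n := by
      refine Finset.mem_insert_of_mem (Finset.mem_filter.mpr ⟨?_, hqa⟩)
      refine Finset.mem_image.mpr ⟨(Denumerable.eqv ℚ) q, ?_, by simp [he]⟩
      exact Finset.mem_range.mpr (Nat.lt_succ_of_le (le_max_left _ _))
    have hq'mem : ((q':ℚ):ℝ) ∈ G n := by
      refine Finset.mem_insert_of_mem (Finset.mem_filter.mpr ⟨?_, hq'a⟩)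
      refine Finset.mem_image.mpr ⟨(Denumerable.eqv ℚ) q', ?_, by simp [he]⟩
      exact Finset.mem_range.mpr (Nat.lt_succ_of_le (le_max_right _ _))
    exact ⟨_, hqmem, _, hq'mem, hgt⟩
  calc μ {ω | ∃ q q' : ℚ, (q:ℝ) ≤ a ∧ (q':ℝ) ≤ a ∧ ε < |M q ω - M q' ω|}
      ≤ μ (⋃ n, D n) := measure_mono hcover
    _ = ⨆ n, μ (D n) := Directed.measure_iUnion (hDmono.directed_le)
    _ ≤ ENNReal.ofReal (K / (ε/2)^2) := iSup_le hDbound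

lemma ae_exists_lim (hcad : ∀ ω, ∀ t, ContinuousWithinAt (fun u => M u ω) (Ici t) t)
    {C : ℝ} (hC : ∀ s : ℝ, s ≤ 0 → ∫ ω, (incr M s 0 ω)^2 ∂μ ≤ C) :
    ∀ᵐ ω ∂μ, ∃ z, Tendsto (fun s => M s ω) atBot (𝓝 z) := by
  classical
  set φ : ℝ → ℝ := fun s => ∫ ω, (incr M s 0 ω)^2 ∂μ with hφdef
  have hbdd : BddAbove (Set.range fun n : ℕ => φ (-(n:ℝ))) := by
    refine ⟨C, ?_⟩
    rintro x ⟨n, rfl⟩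
    exact hC _ (neg_nonpos.mpr (Nat.cast_nonneg n))
  set L : ℝ := ⨆ n : ℕ, φ (-(n:ℝ)) with hLdef
  have hmono : Monotone fun n : ℕ => φ (-(n:ℝ)) := fun n n' h =>
    phi_mono hmart hL2 (neg_le_neg (Nat.cast_le.mpr h))
  have hLtend : Tendsto (fun n : ℕ => φ (-(n:ℝ))) atTop (𝓝 L) :=
    tendsto_atTop_ciSup hmono hbdd
  have hφL : ∀ s : ℝ, φ s ≤ L := by
    intro s
    have h1 : -((⌈-s⌉₊ : ℕ) : ℝ) ≤ s := by
      have := Nat.le_ceil (-s)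
      linarith
    exact (phi_mono hmart hL2 h1).trans (le_ciSup hbdd ⌈-s⌉₊)
  have hKn : ∀ n : ℕ, ∀ s₀ : ℝ, s₀ ≤ -(n:ℝ) →
      ∫ ω, (incr M s₀ (-(n:ℝ)) ω)^2 ∂μ ≤ L - φ (-(n:ℝ)) := by
    intro n s₀ h
    have hsplit := sq_integral_split hmart hL2 h (neg_nonpos.mpr (Nat.cast_nonneg n))
    have h2 := hφL s₀
    simp only [hφdef] at h2 hsplit ⊢
    linarith
  have hbad : ∀ k : ℕ, ∀ᵐ ω ∂μ, ∃ n : ℕ, ∀ q q' : ℚ, (q:ℝ) ≤ -(n:ℝ) → (q':ℝ) ≤ -(n:ℝ) →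
      |M q ω - M q' ω| ≤ 1/((k:ℝ)+1) := by
    intro k
    set ε : ℝ := 1/((k:ℝ)+1) with hεdef
    have hεpos : 0 < ε := by positivity
    set B : Set Ω := ⋂ n : ℕ, {ω | ∃ q q' : ℚ,
      (q:ℝ) ≤ -(n:ℝ) ∧ (q':ℝ) ≤ -(n:ℝ) ∧ ε < |M q ω - M q' ω|} with hBdef
    have hBle : ∀ n : ℕ, μ B ≤ ENNReal.ofReal ((L - φ (-(n:ℝ))) / (ε/2)^2) :=
      fun n => le_trans (measure_mono (Set.iInter_subset _ n))
        (osc_bound hmart hL2 hεpos (hKn n))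
    have htend0 : Tendsto (fun n : ℕ => ENNReal.ofReal ((L - φ (-(n:ℝ))) / (ε/2)^2))
        atTop (𝓝 0) := by
      have h2 : Tendsto (fun n : ℕ => L - φ (-(n:ℝ))) atTop (𝓝 0) := by
        have := tendsto_const_nhds (x := L) (f := atTop (α := ℕ))
        simpa using this.sub hLtend
      have h1 : Tendsto (fun n : ℕ => (L - φ (-(n:ℝ))) / (ε/2)^2) atTop (𝓝 0) := by
        simpa using h2.div_const ((ε/2)^2)
      simpa using ENNReal.tendsto_ofReal h1
    have hB0 : μ B = 0 :=
      le_antisymm (ge_of_tendsto htend0 (Eventually.of_forall hBle)) zero_le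
    rw [ae_iff]
    refine measure_mono_null ?_ hB0
    intro ω hω
    simp only [Set.mem_setOf_eq] at hω
    push_neg at hω
    refine Set.mem_iInter.mpr fun n => ?_
    obtain ⟨q, q', hq, hq', hgt⟩ := hω n
    exact ⟨q, q', hq, hq', hgt⟩
  have hgood : ∀ᵐ ω ∂μ, ∀ k : ℕ, ∃ n : ℕ, ∀ q q' : ℚ, (q:ℝ) ≤ -(n:ℝ) → (q':ℝ) ≤ -(n:ℝ) →
      |M q ω - M q' ω| ≤ 1/((k:ℝ)+1) := ae_all_iff.mpr hbad
  filter_upwards [hgood] with ω hω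
  set u : ℕ → ℝ := fun n => M (-(n:ℝ)) ω with hudef
  have hqcast : ∀ n : ℕ, ((-(n:ℚ) : ℚ) : ℝ) = -(n:ℝ) := by intro n; push_cast; ring
  have hcauchy : CauchySeq u := by
    rw [Metric.cauchySeq_iff']
    intro ε hεpos
    obtain ⟨k, hk⟩ := exists_nat_one_div_lt hεpos
    obtain ⟨n, hn⟩ := hω k
    refine ⟨n, fun mm hm => ?_⟩
    have h1 := hn (-(mm:ℚ)) (-(n:ℚ))
      (by rw [hqcast]; exact neg_le_neg (Nat.cast_le.mpr hm))
      (by rw [hqcast])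
    rw [Real.dist_eq]
    rw [hqcast, hqcast] at h1
    calc |u mm - u n| ≤ 1/((k:ℝ)+1) := h1
      _ < ε := hk
  obtain ⟨z, hz⟩ := cauchySeq_tendsto_of_complete hcauchy
  refine ⟨z, ?_⟩
  rw [Metric.tendsto_nhds]
  intro ε hεpos
  rw [Filter.eventually_atBot]
  obtain ⟨k, hk⟩ := exists_nat_one_div_lt (show (0:ℝ) < ε/3 by linarith)
  obtain ⟨n, hn⟩ := hω k
  obtain ⟨N, hN⟩ := (Metric.tendsto_atTop.mp hz) (1/((k:ℝ)+1)) (by positivity)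
  set mm : ℕ := max n N with hmm
  have hdistm : dist (u mm) z < 1/((k:ℝ)+1) := hN mm (le_max_right _ _)
  refine ⟨-(n:ℝ) - 1, fun s hs => ?_⟩
  obtain ⟨q, hq1, hq2, hq3⟩ := exists_rat_near (hcad ω s)
    (show (0:ℝ) < 1/((k:ℝ)+1) by positivity) (show s < s+1 by linarith)
  have hqn : (q:ℝ) ≤ -(n:ℝ) := by linarith
  have h4 := hn q (-(mm:ℚ)) hqn
    (by rw [hqcast]; exact neg_le_neg (Nat.cast_le.mpr (le_max_left _ _)))
  rw [hqcast] at h4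
  have : dist (M s ω) z ≤ |M s ω - M q ω| + |M q ω - u mm| + dist (u mm) z := by
    rw [Real.dist_eq, Real.dist_eq] at *
    have h5 : M s ω - z = -(M q ω - M s ω) + (M q ω - u mm) + (u mm - z) := by
      simp only [hudef]; ring
    rw [h5]
    calc |(-(M q ω - M s ω)) + (M q ω - u mm) + (u mm - z)|
        ≤ |(-(M q ω - M s ω)) + (M q ω - u mm)| + |u mm - z| := abs_add_le _ _
      _ ≤ |(-(M q ω - M s ω))| + |M q ω - u mm| + |u mm - z| := by
          have := abs_add_le (-(M q ω - M s ω)) (M q ω - u mm)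
          linarith
      _ = |M q ω - M s ω| + |M q ω - u mm| + |u mm - z| := by rw [abs_neg]
      _ = |M s ω - M q ω| + |M q ω - u mm| + |u mm - z| := by rw [abs_sub_comm]
  have h6 : |M s ω - M q ω| < 1/((k:ℝ)+1) := by rw [abs_sub_comm]; exact hq3
  have h7 : 3 * (1/((k:ℝ)+1)) < ε := by linarith
  calc dist (M s ω) z ≤ |M s ω - M q ω| + |M q ω - u mm| + dist (u mm) z := this
    _ < ε := by
        have h8 : |M q ω - u mm| ≤ 1/((k:ℝ)+1) := h4
        linarith

lemma backward (hcpl : ∀ (t : ℝ) (s : Set Ω), μ s = 0 → MeasurableSet[ℱ t] s)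
    (hcad : ∀ ω, ∀ t, ContinuousWithinAt (fun u => M u ω) (Ici t) t)
    {C : ℝ} (hC : ∀ s : ℝ, s ≤ 0 → ∫ ω, (incr M s 0 ω)^2 ∂μ ≤ C) :
    ∃ Z : Ω → ℝ, (∀ᵐ ω ∂μ, Tendsto (fun s => M s ω) atBot (𝓝 (Z ω))) ∧
      Martingale (fun t ω => M t ω - Z ω) ℱ μ ∧
      (∀ t, Integrable (fun ω => M t ω - Z ω) μ) ∧
      (∀ t, MemLp (fun ω => M t ω - Z ω) 2 μ) := by
  classical
  have hae := ae_exists_lim hmart hL2 hcad hC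
  have hnegtend : Tendsto (fun n : ℕ => -(n:ℝ)) atTop atBot :=
    tendsto_neg_atTop_atBot.comp tendsto_natCast_atTop_atTop
  -- measurable limit functions W t
  have hW : ∀ t : ℝ, ∃ W : Ω → ℝ, Measurable[ℱ t] W ∧
      ∀ᵐ ω ∂μ, Tendsto (fun n : ℕ => incr M (min t (-(n:ℝ))) t ω) atTop (𝓝 (W ω)) := by
    intro t
    have hconv : ∀ᵐ ω ∂μ, ∃ l, Tendsto (fun n : ℕ => incr M (min t (-(n:ℝ))) t ω)
        atTop (𝓝 l) := by
      filter_upwards [hae] with ω hω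
      obtain ⟨z, hz⟩ := hω
      refine ⟨M t ω - z, ?_⟩
      have h2 : Tendsto (fun n : ℕ => min t (-(n:ℝ))) atTop atBot :=
        tendsto_atBot_mono (fun n => min_le_right _ _) hnegtend
      have h3 : Tendsto (fun n : ℕ => M (min t (-(n:ℝ))) ω) atTop (𝓝 z) := hz.comp h2
      have h4 : (fun n : ℕ => incr M (min t (-(n:ℝ))) t ω)
          = fun n : ℕ => M t ω - M (min t (-(n:ℝ))) ω := by
        funext n; rw [incr_of_le (min_le_left _ _)]
      rw [h4]
      exact tendsto_const_nhds.sub h3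
    set S : Set Ω := {ω | ¬ ∃ l, Tendsto (fun n : ℕ => incr M (min t (-(n:ℝ))) t ω)
      atTop (𝓝 l)} with hSdef
    have hS0 : μ S = 0 := by
      have := ae_iff.mp hconv
      exact this
    have hSmeas : MeasurableSet[ℱ t] S := hcpl t S hS0
    have htrim : ∀ᵐ ω ∂(μ.trim (ℱ.le t)), ∃ l,
        Tendsto (fun n : ℕ => incr M (min t (-(n:ℝ))) t ω) atTop (𝓝 l) := by
      rw [ae_iff]
      exact (trim_measurableSet_eq (ℱ.le t) hSmeas).trans hS0
    obtain ⟨W, hWmeas, hWtend⟩ := @measurable_limit_of_tendsto_metrizable_ae Ω ℝ (ℱ t) _ _ _ _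
      ℕ _ (μ.trim (ℱ.le t)) (fun n => incr M (min t (-(n:ℝ))) t) atTop _
      (fun n => (((hmart (min t (-(n:ℝ)))).stronglyAdapted t).measurable).aemeasurable) htrim
    exact ⟨W, hWmeas, ae_of_ae_trim (ℱ.le t) hWtend⟩
  choose W hWmeas hWtend using hW
  set Z : Ω → ℝ := fun ω => M 0 ω - W 0 ω with hZdef
  -- identification of limits
  have hWid : ∀ t : ℝ, ∀ᵐ ω ∂μ, ∀ z, Tendsto (fun s => M s ω) atBot (𝓝 z) →
      W t ω = M t ω - z := by
    intro t
    filter_upwards [hWtend t] with ω hωt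
    intro z hz
    have h2 : Tendsto (fun n : ℕ => min t (-(n:ℝ))) atTop atBot :=
      tendsto_atBot_mono (fun n => min_le_right _ _) hnegtend
    have h3 : Tendsto (fun n : ℕ => incr M (min t (-(n:ℝ))) t ω) atTop (𝓝 (M t ω - z)) := by
      have h4 : (fun n : ℕ => incr M (min t (-(n:ℝ))) t ω)
          = fun n : ℕ => M t ω - M (min t (-(n:ℝ))) ω := by
        funext n; rw [incr_of_le (min_le_left _ _)]
      rw [h4]
      exact tendsto_const_nhds.sub (hz.comp h2)
    exact tendsto_nhds_unique hωt h3
  have hZtend : ∀ᵐ ω ∂μ, Tendsto (fun s => M s ω) atBot (𝓝 (Z ω)) := by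
    filter_upwards [hae, hWid 0] with ω hω h0
    obtain ⟨z, hz⟩ := hω
    have : Z ω = z := by rw [hZdef]; simp only; rw [h0 z hz]; ring
    rwa [this]
  have hMZ : ∀ t, (fun ω => M t ω - Z ω) =ᵐ[μ] W t := by
    intro t
    filter_upwards [hae, hWid t, hWid 0] with ω hω ht h0
    obtain ⟨z, hz⟩ := hω
    simp only [hZdef]
    rw [ht z hz, h0 z hz]
    ring
  have hadapt : ∀ t, StronglyMeasurable[ℱ t] (fun ω => M t ω - Z ω) := fun t =>
    patch_stronglyMeasurable (hcpl t) (hWmeas t) (hMZ t)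
  -- uniform L² bounds
  have hsqb : ∀ t : ℝ, ∀ s' : ℝ, s' ≤ min t 0 → ∫ ω, (incr M s' t ω)^2 ∂μ
      ≤ ∫ ω, (incr M (min t 0) t ω)^2 ∂μ + C := by
    intro t s' h
    have hsplit := sq_integral_split hmart hL2 h (min_le_left t 0)
    have hterm : ∫ ω, (incr M s' (min t 0) ω)^2 ∂μ ≤ C := by
      rcases le_total t 0 with ht | ht
      · rw [min_eq_left ht]
        have hs'0 : s' ≤ 0 := le_trans h (le_trans (min_le_left t 0) ht)
        have h2 := sq_integral_split hmart hL2 (le_trans h (min_le_left t 0)) ht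
        have h3 := hC s' hs'0
        have h4 : 0 ≤ ∫ ω, (incr M t 0 ω)^2 ∂μ := integral_nonneg fun ω => sq_nonneg _
        linarith
      · rw [min_eq_right ht]
        exact hC s' (le_trans h (by rw [min_eq_right ht]))
    linarith
  have hWL2 : ∀ t, MemLp (W t) 2 μ := by
    intro t
    have hmeas : AEStronglyMeasurable (W t) μ :=
      (((hWmeas t).mono (ℱ.le t) le_rfl).stronglyMeasurable).aestronglyMeasurable
    refine ⟨hmeas, ?_⟩
    have hfat := Lp.eLpNorm_lim_le_liminf_eLpNorm (p := 2)
      (fun n : ℕ => (hL2 (min t (-(n:ℝ))) t).aestronglyMeasurable) (W t) (hWtend t)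
    have hboundn : ∀ n : ℕ, eLpNorm (incr M (min t (-(n:ℝ))) t) 2 μ
        ≤ ENNReal.ofReal (∫ ω, (incr M (min t 0) t ω)^2 ∂μ + C) ^ (1/2 : ℝ) := by
      intro n
      rw [eLpNorm_two_eq, lintegral_ofReal_sq_eq (hL2 _ _)]
      refine ENNReal.rpow_le_rpow ?_ (by norm_num)
      refine ENNReal.ofReal_le_ofReal ?_
      refine hsqb t _ (min_le_min le_rfl (neg_nonpos.mpr (Nat.cast_nonneg n)))
    have hliminf : atTop.liminf (fun n : ℕ => eLpNorm (incr M (min t (-(n:ℝ))) t) 2 μ)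
        ≤ ENNReal.ofReal (∫ ω, (incr M (min t 0) t ω)^2 ∂μ + C) ^ (1/2 : ℝ) := by
      refine le_trans (Filter.liminf_le_liminf (Eventually.of_forall hboundn)) ?_
      simp [Filter.liminf_const]
    refine lt_of_le_of_lt (le_trans hfat hliminf) ?_
    exact ENNReal.rpow_lt_top_of_nonneg (by norm_num) ENNReal.ofReal_ne_top
  have hMZL2 : ∀ t, MemLp (fun ω => M t ω - Z ω) 2 μ := fun t =>
    (hWL2 t).ae_eq (hMZ t).symm
  have hMZint : ∀ t, Integrable (fun ω => M t ω - Z ω) μ := fun t =>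
    (hMZL2 t).integrable one_le_two
  -- φ and L
  set φ : ℝ → ℝ := fun s => ∫ ω, (incr M s 0 ω)^2 ∂μ with hφdef
  have hbdd : BddAbove (Set.range fun n : ℕ => φ (-(n:ℝ))) := by
    refine ⟨C, ?_⟩
    rintro x ⟨n, rfl⟩
    exact hC _ (neg_nonpos.mpr (Nat.cast_nonneg n))
  set L : ℝ := ⨆ n : ℕ, φ (-(n:ℝ)) with hLdef
  have hmono : Monotone fun n : ℕ => φ (-(n:ℝ)) := fun n n' h =>
    phi_mono hmart hL2 (neg_le_neg (Nat.cast_le.mpr h))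
  have hLtend : Tendsto (fun n : ℕ => φ (-(n:ℝ))) atTop (𝓝 L) :=
    tendsto_atTop_ciSup hmono hbdd
  have hφL : ∀ s : ℝ, φ s ≤ L := by
    intro s
    have h1 : -((⌈-s⌉₊ : ℕ) : ℝ) ≤ s := by
      have := Nat.le_ceil (-s)
      linarith
    exact (phi_mono hmart hL2 h1).trans (le_ciSup hbdd ⌈-s⌉₊)
  -- quantitative L² distance
  have hdist : ∀ s : ℝ, s ≤ 0 → ∫⁻ ω, ENNReal.ofReal ((M s ω - Z ω)^2) ∂μ
      ≤ ENNReal.ofReal (L - φ s) := by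
    intro s hs
    have hptw : ∀ᵐ ω ∂μ, Tendsto
        (fun mm : ℕ => ENNReal.ofReal ((incr M (min s (-(mm:ℝ))) s ω)^2)) atTop
        (𝓝 (ENNReal.ofReal ((M s ω - Z ω)^2))) := by
      filter_upwards [hZtend] with ω hω
      have h2 : Tendsto (fun mm : ℕ => min s (-(mm:ℝ))) atTop atBot :=
        tendsto_atBot_mono (fun mm => min_le_right _ _) hnegtend
      have h3 : Tendsto (fun mm : ℕ => incr M (min s (-(mm:ℝ))) s ω) atTop
          (𝓝 (M s ω - Z ω)) := by
        have h4 : (fun mm : ℕ => incr M (min s (-(mm:ℝ))) s ω)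
            = fun mm : ℕ => M s ω - M (min s (-(mm:ℝ))) ω := by
          funext mm; rw [incr_of_le (min_le_left _ _)]
        rw [h4]
        exact tendsto_const_nhds.sub (hω.comp h2)
      exact (ENNReal.continuous_ofReal.tendsto _).comp (h3.pow 2)
    have hmeasn : ∀ mm : ℕ, Measurable fun ω =>
        ENNReal.ofReal ((incr M (min s (-(mm:ℝ))) s ω)^2) := by
      intro mm
      have h5 : Measurable (incr M (min s (-(mm:ℝ))) s) :=
        ((hmart (min s (-(mm:ℝ)))).stronglyAdapted s).measurable.mono (ℱ.le s) le_rfl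
      exact ENNReal.measurable_ofReal.comp ((h5.pow_const 2))
    have heq : ∫⁻ ω, ENNReal.ofReal ((M s ω - Z ω)^2) ∂μ
        = ∫⁻ ω, atTop.liminf (fun mm : ℕ =>
            ENNReal.ofReal ((incr M (min s (-(mm:ℝ))) s ω)^2)) ∂μ := by
      refine lintegral_congr_ae ?_
      filter_upwards [hptw] with ω hω
      exact (hω.liminf_eq).symm
    rw [heq]
    refine le_trans (lintegral_liminf_le hmeasn) ?_
    have hboundm : ∀ mm : ℕ, ∫⁻ ω, ENNReal.ofReal ((incr M (min s (-(mm:ℝ))) s ω)^2) ∂μ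
        ≤ ENNReal.ofReal (L - φ s) := by
      intro mm
      rw [lintegral_ofReal_sq_eq (hL2 _ _)]
      refine ENNReal.ofReal_le_ofReal ?_
      have hsplit := sq_integral_split hmart hL2 (min_le_left s (-(mm:ℝ))) hs
      have := hφL (min s (-(mm:ℝ)))
      simp only [hφdef] at this hsplit ⊢
      linarith
    refine le_trans (Filter.liminf_le_liminf (Eventually.of_forall hboundm)) ?_
    simp [Filter.liminf_const]
  -- martingale property
  have hmartZ : ∀ u t : ℝ, u ≤ t →
      μ[(fun ω => M t ω - Z ω)|ℱ u] =ᵐ[μ] fun ω => M u ω - Z ω := by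
    intro u t hut
    haveI : SigmaFinite (μ.trim (ℱ.le u)) := by infer_instance
    set sn : ℕ → ℝ := fun n => min u (-(n:ℝ)) with hsndef
    have hsnu : ∀ n, sn n ≤ u := fun n => min_le_left _ _
    have hsn0 : ∀ n, sn n ≤ 0 := fun n =>
      le_trans (min_le_right _ _) (neg_nonpos.mpr (Nat.cast_nonneg n))
    have hint : ∀ s' t', Integrable (incr M s' t') μ := fun s' t' =>
      (hL2 s' t').integrable one_le_two
    have hDmeas : AEStronglyMeasurable
        (μ[(fun ω => M t ω - Z ω)|ℱ u] - fun ω => M u ω - Z ω) μ :=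
      ((stronglyMeasurable_condExp.mono (ℱ.le u)).aestronglyMeasurable).sub
        (hMZL2 u).aestronglyMeasurable
    suffices hzero : eLpNorm (μ[(fun ω => M t ω - Z ω)|ℱ u] - fun ω => M u ω - Z ω) 1 μ = 0 by
      have h6 := (eLpNorm_eq_zero_iff hDmeas one_ne_zero).mp hzero
      filter_upwards [h6] with ω hω
      have : (μ[(fun ω => M t ω - Z ω)|ℱ u]) ω - (M u ω - Z ω) = 0 := hω
      linarith
    have key : ∀ n : ℕ, eLpNorm (μ[(fun ω => M t ω - Z ω)|ℱ u] - fun ω => M u ω - Z ω) 1 μ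
        ≤ 2 * eLpNorm (fun ω => M (sn n) ω - Z ω) 1 μ := by
      intro n
      have hA : (fun ω => (M t ω - Z ω) - incr M (sn n) t ω) = fun ω => M (sn n) ω - Z ω := by
        funext ω
        rw [incr_of_le (le_trans (hsnu n) hut)]
        ring
      have hB : (fun ω => incr M (sn n) u ω - (M u ω - Z ω)) = fun ω => -(M (sn n) ω - Z ω) := by
        funext ω
        rw [incr_of_le (hsnu n)]
        ring
      have hcond : μ[incr M (sn n) t|ℱ u] =ᵐ[μ] incr M (sn n) u :=
        (hmart (sn n)).condExp_ae_eq hut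
      have hcsub : μ[(fun ω => (M t ω - Z ω) - incr M (sn n) t ω)|ℱ u]
          =ᵐ[μ] μ[(fun ω => M t ω - Z ω)|ℱ u] - μ[incr M (sn n) t|ℱ u] := by
        have := condExp_sub (m := ℱ u) (hMZint t) (hint (sn n) t) (μ := μ)
        exact this
      have e1 : μ[(fun ω => M t ω - Z ω)|ℱ u] - (fun ω => M u ω - Z ω)
          =ᵐ[μ] μ[(fun ω => (M t ω - Z ω) - incr M (sn n) t ω)|ℱ u]
            + (fun ω => incr M (sn n) u ω - (M u ω - Z ω)) := by
        filter_upwards [hcsub, hcond] with ω h1 h2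
        simp only [Pi.add_apply, Pi.sub_apply] at h1 h2 ⊢
        rw [h1, h2]
        ring
      calc eLpNorm (μ[(fun ω => M t ω - Z ω)|ℱ u] - fun ω => M u ω - Z ω) 1 μ
          = eLpNorm (μ[(fun ω => (M t ω - Z ω) - incr M (sn n) t ω)|ℱ u]
            + fun ω => incr M (sn n) u ω - (M u ω - Z ω)) 1 μ := eLpNorm_congr_ae e1
        _ ≤ eLpNorm (μ[(fun ω => (M t ω - Z ω) - incr M (sn n) t ω)|ℱ u]) 1 μ
            + eLpNorm (fun ω => incr M (sn n) u ω - (M u ω - Z ω)) 1 μ :=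
            eLpNorm_add_le
              ((stronglyMeasurable_condExp.mono (ℱ.le u)).aestronglyMeasurable)
              ((hint (sn n) u).aestronglyMeasurable.sub (hMZL2 u).aestronglyMeasurable)
              le_rfl
        _ ≤ eLpNorm (fun ω => (M t ω - Z ω) - incr M (sn n) t ω) 1 μ
            + eLpNorm (fun ω => incr M (sn n) u ω - (M u ω - Z ω)) 1 μ := by
            gcongr
            exact eLpNorm_one_condExp_le_eLpNorm _
        _ = 2 * eLpNorm (fun ω => M (sn n) ω - Z ω) 1 μ := by
            rw [hA, hB]
            rw [show (fun ω => -(M (sn n) ω - Z ω)) = -(fun ω => M (sn n) ω - Z ω) from rfl]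
            rw [eLpNorm_neg]
            ring
    have hto0 : Tendsto (fun n : ℕ => 2 * eLpNorm (fun ω => M (sn n) ω - Z ω) 1 μ)
        atTop (𝓝 0) := by
      have hb : ∀ n : ℕ, eLpNorm (fun ω => M (sn n) ω - Z ω) 1 μ
          ≤ ENNReal.ofReal (L - φ (-(n:ℝ))) ^ (1/2 : ℝ) := by
        intro n
        have h1 : eLpNorm (fun ω => M (sn n) ω - Z ω) 1 μ
            ≤ eLpNorm (fun ω => M (sn n) ω - Z ω) 2 μ :=
          eLpNorm_le_eLpNorm_of_exponent_le (by norm_num)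
            (hMZL2 (sn n)).aestronglyMeasurable
        refine le_trans h1 ?_
        rw [eLpNorm_two_eq]
        refine ENNReal.rpow_le_rpow ?_ (by norm_num)
        refine le_trans (hdist (sn n) (hsn0 n)) (ENNReal.ofReal_le_ofReal ?_)
        have h2 : φ (-(n:ℝ)) ≤ φ (sn n) := phi_mono hmart hL2 (min_le_right _ _)
        linarith
      have hbt : Tendsto (fun n : ℕ => ENNReal.ofReal (L - φ (-(n:ℝ))) ^ (1/2 : ℝ))
          atTop (𝓝 0) := by
        have h2 : Tendsto (fun n : ℕ => L - φ (-(n:ℝ))) atTop (𝓝 0) := by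
          have := tendsto_const_nhds (x := L) (f := atTop (α := ℕ))
          simpa using this.sub hLtend
        have h3 : Tendsto (fun n : ℕ => ENNReal.ofReal (L - φ (-(n:ℝ)))) atTop (𝓝 0) := by
          simpa using ENNReal.tendsto_ofReal h2
        have h4 := (ENNReal.continuous_rpow_const (y := (1/2:ℝ))).tendsto 0
        have h5 := h4.comp h3
        simpa [Function.comp_def, ENNReal.zero_rpow_of_pos (by norm_num : (0:ℝ) < 1/2)] using h5
      have hsq : Tendsto (fun n : ℕ => eLpNorm (fun ω => M (sn n) ω - Z ω) 1 μ)
          atTop (𝓝 0) := by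
        refine tendsto_of_tendsto_of_tendsto_of_le_of_le tendsto_const_nhds hbt
          (fun n => zero_le) hb
      have := ENNReal.Tendsto.const_mul (a := 2) hsq (Or.inr (by norm_num : (2:ℝ≥0∞) ≠ ⊤))
      simpa using this
    have hle : eLpNorm (μ[(fun ω => M t ω - Z ω)|ℱ u] - fun ω => M u ω - Z ω) 1 μ ≤ 0 :=
      ge_of_tendsto hto0 (Eventually.of_forall key)
    exact le_antisymm hle zero_le
  refine ⟨Z, hZtend, ⟨hadapt, fun u t hut => hmartZ u t hut⟩, hMZint, hMZL2⟩

end Mart2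

lemma forward {N : ℝ → Ω → ℝ} {ℱ : Filtration ℝ m} (hm : Martingale N ℱ μ)
    (hint : ∀ t, Integrable (N t) μ) (hL2N : ∀ t, MemLp (N t) 2 μ) :
    (∀ s, Martingale (incr N s) ℱ μ) ∧ (∀ s t, Integrable (incr N s t) μ) ∧
      (∀ s t, MemLp (incr N s t) 2 μ) ∧
      ∀ s : ℝ, s ≤ 0 → ∫ ω, (N 0 ω - N s ω)^2 ∂μ ≤ ∫ ω, (N 0 ω)^2 ∂μ := by
  have hsub : ∀ s t, incr N s t = fun ω => N t ω - N (min t s) ω := fun s t => rfl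
  have hintincr : ∀ s t, Integrable (incr N s t) μ := fun s t =>
    (hint t).sub (hint (min t s))
  have hcondmin : ∀ s u t : ℝ, u ≤ t → μ[N (min t s)|ℱ u] =ᵐ[μ] N (min u s) := by
    intro s u t hut
    rcases le_total s u with hsu | hus
    · have h1 : min t s = s := min_eq_right (le_trans hsu hut)
      have h2 : min u s = s := min_eq_right hsu
      rw [h1, h2]
      have h3 : μ[N s|ℱ u] = N s :=
        condExp_of_stronglyMeasurable (ℱ.le u) ((hm.stronglyAdapted s).mono (ℱ.mono hsu)) (hint s)
      rw [h3]
    · have h2 : min u s = u := min_eq_left hus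
      rw [h2]
      exact hm.condExp_ae_eq (le_min hut hus)
  have hmartincr : ∀ s, Martingale (incr N s) ℱ μ := by
    intro s
    constructor
    · intro t
      rw [hsub]
      exact (hm.stronglyAdapted t).sub ((hm.stronglyAdapted (min t s)).mono (ℱ.mono (min_le_left t s)))
    · intro u t hut
      have h1 : μ[incr N s t|ℱ u] =ᵐ[μ] μ[N t|ℱ u] - μ[N (min t s)|ℱ u] :=
        condExp_sub (hint t) (hint (min t s)) _
      refine h1.trans ?_
      filter_upwards [hm.condExp_ae_eq hut, hcondmin s u t hut] with ω e1 e2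
      simp only [Pi.sub_apply]
      rw [e1, e2]
      rfl
  have hL2incr : ∀ s t, MemLp (incr N s t) 2 μ := fun s t =>
    (hL2N t).sub (hL2N (min t s))
  refine ⟨hmartincr, hintincr, hL2incr, ?_⟩
  intro s hs
  have h0 : μ[(fun ω => N 0 ω - N s ω)|ℱ s] =ᵐ[μ] 0 := by
    have h1 : μ[N 0 - N s|ℱ s] =ᵐ[μ] μ[N 0|ℱ s] - μ[N s|ℱ s] :=
      condExp_sub (hint 0) (hint s) _
    have h2 : μ[N s|ℱ s] = N s :=
      condExp_of_stronglyMeasurable (ℱ.le s) (hm.stronglyAdapted s) (hint s)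
    have h3 : (fun ω => N 0 ω - N s ω) = N 0 - N s := rfl
    rw [h3]
    refine h1.trans ?_
    filter_upwards [hm.condExp_ae_eq hs] with ω e1
    simp only [Pi.sub_apply, h2, e1, Pi.zero_apply, sub_self]
  have hp := pyth (ℱ.le s) (hL2N s) ((hL2N 0).sub (hL2N s)) (hm.stronglyAdapted s) h0
  simp only [Pi.sub_apply] at hp
  have h4 : (fun ω => (N s ω + (N 0 ω - N s ω))^2) = fun ω => (N 0 ω)^2 := by
    funext ω; ring
  rw [h4] at hp
  have h5 : 0 ≤ ∫ ω, (N s ω)^2 ∂μ := integral_nonneg fun ω => sq_nonneg _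
  linarith

end Stmt7Aux

/-- for a càdlàg process `M`, the following are equivalent:
(c) `M_{-∞}` exists a.s. and `(M_t - M_{-∞})_t` is a square integrable martingale;
(d) `M` is an increment square integrable martingale and `sup_{s≤0} E[(M_0 - M_s)²] < ∞`. -/
theorem stmt7 {Ω : Type*} {m : MeasurableSpace Ω} {μ : Measure Ω} [IsProbabilityMeasure μ]
    (ℱ : Filtration ℝ m) (hrc : RightContinuousFiltration ℱ) (hcpl : CompleteFiltration ℱ μ)
    (M : ℝ → Ω → ℝ) (hcad : ∀ ω, Cadlag fun t => M t ω) :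
    (∃ Z : Ω → ℝ, (∀ᵐ ω ∂μ, Tendsto (fun s => M s ω) atBot (nhds (Z ω))) ∧
        IsSqMart ℱ μ fun t ω => M t ω - Z ω) ↔
      (IsIncSqMart ℱ μ M ∧
        ∃ C : ℝ, ∀ s : ℝ, s ≤ 0 → ∫ ω, (M 0 ω - M s ω) ^ 2 ∂μ ≤ C) := by
  simp only [IsIncSqMart, IsSqMart, IsMart]
  constructor
  · rintro ⟨Z, hZt, ⟨hNmart, hNint⟩, hNL2⟩
    obtain ⟨hms, his, hls, hbd⟩ := Stmt7Aux.forward hNmart hNint hNL2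
    have hincr_eq : ∀ s, incr M s = incr (fun t ω => M t ω - Z ω) s := by
      intro s; funext t ω; simp only [incr]; ring
    refine ⟨⟨hcad, fun s => ⟨⟨?_, ?_⟩, ?_⟩⟩,
      ⟨∫ ω, (M 0 ω - Z ω)^2 ∂μ, fun s hs => ?_⟩⟩
    · rw [hincr_eq]; exact hms s
    · intro t; rw [hincr_eq]; exact his s t
    · intro t; rw [hincr_eq]; exact hls s t
    · have h1 : ∀ ω, M 0 ω - M s ω = (M 0 ω - Z ω) - (M s ω - Z ω) := fun ω => by ring
      simp_rw [h1]
      exact hbd s hs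
  · rintro ⟨⟨hcad', hsq⟩, ⟨C, hC⟩⟩
    have hmart : ∀ s, Martingale (incr M s) ℱ μ := fun s => (hsq s).1.1
    have hL2 : ∀ s t, MemLp (incr M s t) 2 μ := fun s t => (hsq s).2 t
    have hC' : ∀ s : ℝ, s ≤ 0 → ∫ ω, (incr M s 0 ω)^2 ∂μ ≤ C := by
      intro s hs
      have h1 : ∀ ω, incr M s 0 ω = M 0 ω - M s ω := fun ω => by
        simp [incr, min_eq_right hs]
      simp_rw [h1]
      exact hC s hs
    obtain ⟨Z, h1, h2, h3, h4⟩ := Stmt7Aux.backward hmart hL2 hcpl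
      (fun ω t => (hcad ω).1 t) hC'
    exact ⟨Z, h1, ⟨h2, h3⟩, h4⟩
end
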